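/- arXiv:1911.01650 — 7 statements merged into one kernel-verified Lean document; each statement's English description precedes it below -/
import Mathlib

section
/- Let Φ be an irreducible root system with extended base Δ̃ = Δ ∪ {α₀}, where α₀ = −α̃. Let 𝒥 ⊊ Δ̃ be a proper subset. Then 𝒥 is a base (system of simple roots) for the root subsystem Φ_𝒥(ℤ) := Φ ∩ ℤ𝒥, i.e., every root in Φ that is an integer linear combination of elements of 𝒥 is either a nonnegative or a nonpositive integer combination of elements of 𝒥. -/
open scoped RealInnerProductSpace Classical BigOperators

noncomputable section

abbrev V (ℓ : ℕ) := EuclideanSpace ℝ (Fin ℓ)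

/-- An irreducible crystallographic (reduced) root system in `ℝ^ℓ`, together with a choice of
positive system, base of simple roots, highest root with its marks `c i`, and the Weyl group
(generated by the reflections in the roots). -/
structure RootSystemData (ℓ : ℕ) where
  Φ : Set (V ℓ)
  finite : Φ.Finite
  nonzero : (0 : V ℓ) ∉ Φ
  spanning : Submodule.span ℝ Φ = ⊤
  neg_mem : ∀ α ∈ Φ, -α ∈ Φ
  reduced : ∀ α ∈ Φ, ∀ t : ℝ, t • α ∈ Φ → t = 1 ∨ t = -1
  crystallographic : ∀ α ∈ Φ, ∀ β ∈ Φ, ∃ n : ℤ, 2 * ⟪α, β⟫ / ⟪β, β⟫ = (n : ℝ)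
  reflect_mem : ∀ α ∈ Φ, ∀ β ∈ Φ, β - (2 * ⟪β, α⟫ / ⟪α, α⟫) • α ∈ Φ
  irreducible : ¬ ∃ Φ₁ Φ₂ : Set (V ℓ), Φ₁.Nonempty ∧ Φ₂.Nonempty ∧ Φ₁ ∪ Φ₂ = Φ ∧
      ∀ α ∈ Φ₁, ∀ β ∈ Φ₂, ⟪α, β⟫ = 0
  /-- the positive system `Φ⁺` -/
  pos : Set (V ℓ)
  pos_subset : pos ⊆ Φ
  pos_choice : ∀ α ∈ Φ, (α ∈ pos ↔ -α ∉ pos)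
  /-- the simple roots `α₁, …, α_ℓ` -/
  simple : Fin ℓ → V ℓ
  simple_mem : ∀ i, simple i ∈ pos
  simple_indep : LinearIndependent ℝ simple
  pos_comb : ∀ α ∈ pos, ∃ d : Fin ℓ → ℕ, α = ∑ i, (d i : ℝ) • simple i
  /-- the marks `c i` of the highest root -/
  c : Fin ℓ → ℕ
  c_pos : ∀ i, 0 < c i
  /-- the highest root `α̃` -/
  highest : V ℓ
  highest_mem : highest ∈ pos
  highest_eq : highest = ∑ i, (c i : ℝ) • simple i
  highest_max : ∀ α ∈ pos, ∃ d : Fin ℓ → ℕ, highest - α = ∑ i, (d i : ℝ) • simple i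
  /-- the Weyl group `W` -/
  W : Subgroup ((V ℓ) ≃ₗ[ℝ] (V ℓ))
  W_gen : W = Subgroup.closure
      {s : (V ℓ) ≃ₗ[ℝ] (V ℓ) | ∃ α ∈ Φ, ∀ x, s x = x - (2 * ⟪x, α⟫ / ⟪α, α⟫) • α}

namespace RootSystemData

variable {ℓ : ℕ} (R : RootSystemData ℓ)

/-- The extended base `Δ̃ = {α₀, α₁, …, α_ℓ}`, with `none ↦ α₀ = -α̃`. -/
def ext : Option (Fin ℓ) → V ℓ
  | none => -R.highest
  | some i => R.simple i

/-- The extended marks, with `c₀ = 1`. -/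
def cExt : Option (Fin ℓ) → ℕ
  | none => 1
  | some i => R.c i

/-- The Coxeter number `h = c₀ + c₁ + ⋯ + c_ℓ`. -/
def coxh : ℕ := ∑ i : Option (Fin ℓ), R.cExt i

/-- The descent statistic `dsc_Ψ(w) = ∑_{w(α_i) ∈ -Ψᶜ} c_i` (`Ψᶜ = Φ⁺ \ Ψ`). -/
def dsc (Ψ : Set (V ℓ)) (w : (V ℓ) ≃ₗ[ℝ] (V ℓ)) : ℕ :=
  ∑ i : Option (Fin ℓ), if w (R.ext i) ∈ (-(R.pos \ Ψ) : Set (V ℓ)) then R.cExt i else 0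

/-- `dsc̄_Ψ(w) = ∑_{w(α_i) ∈ -Ψ} c_i`. -/
def dscBar (Ψ : Set (V ℓ)) (w : (V ℓ) ≃ₗ[ℝ] (V ℓ)) : ℕ :=
  ∑ i : Option (Fin ℓ), if w (R.ext i) ∈ (-Ψ : Set (V ℓ)) then R.cExt i else 0

/-- `asc_Ψ(w) = ∑_{w(α_i) ∈ Ψᶜ} c_i`. -/
def asc (Ψ : Set (V ℓ)) (w : (V ℓ) ≃ₗ[ℝ] (V ℓ)) : ℕ :=
  ∑ i : Option (Fin ℓ), if w (R.ext i) ∈ R.pos \ Ψ then R.cExt i else 0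

/-- `asc̄_Ψ(w) = ∑_{w(α_i) ∈ Ψ} c_i`. -/
def ascBar (Ψ : Set (V ℓ)) (w : (V ℓ) ≃ₗ[ℝ] (V ℓ)) : ℕ :=
  ∑ i : Option (Fin ℓ), if w (R.ext i) ∈ Ψ then R.cExt i else 0

/-- The affine hyperplane `H_{α,m} = {x : (α,x) = m}`. -/
def Hyp {ℓ' : ℕ} (α : V ℓ') (m : ℤ) : Set (V ℓ') := {x | ⟪α, x⟫ = (m : ℝ)}

/-- The complement of all the affine hyperplanes `H_{α,m}`, `α ∈ Φ⁺`, `m ∈ ℤ`. -/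
def AffC : Set (V ℓ) := {x | ∀ α ∈ R.pos, ∀ m : ℤ, ⟪α, x⟫ ≠ (m : ℝ)}

/-- An alcove is a connected component of the complement of the affine hyperplanes. -/
def IsAlcove (A : Set (V ℓ)) : Prop :=
  ∃ x ∈ R.AffC, A = connectedComponentIn R.AffC x

/-- The half-open fundamental parallelepiped `P^◊ = {x : 0 < (α_i,x) ≤ 1 for all i}`. -/
def Pdia : Set (V ℓ) := {x | ∀ i, 0 < ⟪R.simple i, x⟫ ∧ ⟪R.simple i, x⟫ ≤ 1}

/-- The partial closure `A^◊` of an alcove `A`: the points of the closure lying only on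
walls `H_{α,m}` for which the alcove is on the lower (`<`) side. -/
def pc (A : Set (V ℓ)) : Set (V ℓ) :=
  {x ∈ closure A | ∀ α ∈ R.pos, ∀ m : ℤ, ⟪α, x⟫ = (m : ℝ) → ∀ y ∈ A, ⟪α, y⟫ < (m : ℝ)}

/-- The coweight lattice `Z(Φ^∨)`. -/
def coweightLat : AddSubgroup (V ℓ) where
  carrier := {x | ∀ i, ∃ n : ℤ, ⟪R.simple i, x⟫ = (n : ℝ)}
  add_mem' := by
    intro x y hx hy i
    obtain ⟨n, hn⟩ := hx i
    obtain ⟨m, hm⟩ := hy i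
    exact ⟨n + m, by push_cast; rw [inner_add_right, hn, hm]⟩
  zero_mem' := fun i => ⟨0, by simp⟩
  neg_mem' := by
    intro x hx i
    obtain ⟨n, hn⟩ := hx i
    exact ⟨-n, by push_cast; rw [inner_neg_right, hn]⟩

/-- The coroot lattice `Q(Φ^∨)`, generated by the simple coroots. -/
def corootLat : AddSubgroup (V ℓ) :=
  AddSubgroup.closure {v | ∃ i, v = (2 / ⟪R.simple i, R.simple i⟫) • R.simple i}

/-- The index of connection `f = [Z(Φ^∨) : Q(Φ^∨)]`. -/
def conIndex : ℕ := (R.corootLat.addSubgroupOf R.coweightLat).index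

/-- The open fundamental alcove `A^∘`. -/
def alc : Set (V ℓ) := {x | (∀ i, 0 < ⟪R.simple i, x⟫) ∧ ⟪R.highest, x⟫ < 1}

/-- The closed fundamental alcove `Ā^∘`. -/
def alcC : Set (V ℓ) := {x | (∀ i, 0 ≤ ⟪R.simple i, x⟫) ∧ ⟪R.highest, x⟫ ≤ 1}

/-- The Ehrhart counting function `L_P(q) = #(qP ∩ Z(Φ^∨))` (with value `0` for `q < 0`). -/
def LP (P : Set (V ℓ)) (q : ℤ) : ℕ :=
  if q < 0 then 0 else Set.ncard {x : V ℓ | x ∈ R.coweightLat ∧ ∃ y ∈ P, x = (q : ℝ) • y}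

/-- `S` is a facet of the partially closed alcove `A^◊`. -/
def IsFacetOf (A S : Set (V ℓ)) : Prop :=
  (∃ β ∈ R.pos, ∃ m : ℤ, S = R.pc A ∩ Hyp β m) ∧
    Module.finrank ℝ (vectorSpan ℝ S) = ℓ - 1

/-- `Ψ ⊆ Φ⁺` is compatible with the Worpitzky partition. -/
def Compatible (Ψ : Set (V ℓ)) : Prop :=
  ∀ A : Set (V ℓ), R.IsAlcove A → A ⊆ R.Pdia → ∀ α ∈ Ψ, ∀ m : ℤ,
    (R.pc A ∩ Hyp α m).Nonempty →
      ∃ β ∈ Ψ, ∃ m' : ℤ, R.pc A ∩ Hyp α m ⊆ R.pc A ∩ Hyp β m' ∧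
        R.IsFacetOf A (R.pc A ∩ Hyp β m')

/-- The characteristic quasi-polynomial of `Ψ` w.r.t. the root lattice: the number of points
of `(ℤ/q)^ℓ` avoiding all the subgroups determined by the roots of `Ψ`, whose coordinates in
the basis of simple roots are given by `crd`. -/
def chi (Ψ : Set (V ℓ)) (crd : V ℓ → Fin ℓ → ℕ) (q : ℕ) : ℕ :=
  Nat.card {z : Fin ℓ → ZMod q // ∀ α ∈ Ψ, ∑ i, (crd α i : ZMod q) * z i ≠ 0}

lemma coeff_match' (f g : Fin ℓ → ℝ)
    (h : ∑ i, f i • R.simple i = ∑ i, g i • R.simple i) : ∀ i, f i = g i := by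
  intro i
  have h0 : ∑ i, (f i - g i) • R.simple i = 0 := by
    simp only [sub_smul, Finset.sum_sub_distrib, h, sub_self]
  have := Fintype.linearIndependent_iff.mp R.simple_indep (fun i => f i - g i) h0 i
  linarith [this]

lemma ext_injective : Function.Injective R.ext := by
  have hns : ∀ j : Fin ℓ, -R.highest ≠ R.simple j := by
    intro j h
    have h1 := (R.pos_choice (R.simple j) (R.pos_subset (R.simple_mem j))).mp (R.simple_mem j)
    apply h1
    have : -(R.simple j) = R.highest := by rw [← h]; simp
    rw [this]; exact R.highest_mem
  intro x y h
  match x, y with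
  | none, none => rfl
  | some i, some j =>
      exact congrArg some (R.simple_indep.injective h)
  | none, some j => exact absurd h (hns j)
  | some i, none => exact absurd h.symm (hns i)

lemma exists_int_rep (S : Finset (Option (Fin ℓ))) (γ : V ℓ)
    (h : γ ∈ Submodule.span ℤ (R.ext '' ↑S)) :
    ∃ b : Option (Fin ℓ) → ℤ, γ = ∑ i ∈ S, (b i : ℝ) • R.ext i := by
  have himg : R.ext '' ↑S = ↑(S.image R.ext) := by simp [Finset.coe_image]
  rw [himg] at h
  obtain ⟨f, -, hf⟩ := Submodule.mem_span_finset.mp h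
  refine ⟨fun i => f (R.ext i), ?_⟩
  rw [← hf, Finset.sum_image (fun a _ b _ hab => R.ext_injective hab)]
  refine Finset.sum_congr rfl fun i _ => ?_
  rw [← Int.cast_smul_eq_zsmul ℝ]

lemma sum_S (S : Finset (Option (Fin ℓ))) (b : Option (Fin ℓ) → ℝ) :
    ∑ i ∈ S, b i • R.ext i
      = ∑ i : Fin ℓ, ((if some i ∈ S then b (some i) else 0)
          - (if none ∈ S then b none else 0) * R.c i) • R.simple i := by
  have h1 : ∑ i ∈ S, b i • R.ext i
      = ∑ i : Option (Fin ℓ), (if i ∈ S then b i else 0) • R.ext i := by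
    rw [← Finset.sum_subset (Finset.subset_univ S)]
    · exact Finset.sum_congr rfl fun i hi => by simp [hi]
    · intro i _ hi; simp [hi]
  rw [h1, Fintype.sum_option]
  show (if none ∈ S then b none else 0) • (-R.highest) + _ = _
  rw [R.highest_eq, smul_neg, Finset.smul_sum, ← Finset.sum_neg_distrib,
    ← Finset.sum_add_distrib]
  refine Finset.sum_congr rfl fun i _ => ?_
  show -((if none ∈ S then b none else 0) • (R.c i : ℝ) • R.simple i)
      + (if some i ∈ S then b (some i) else 0) • R.simple i = _
  rw [smul_smul, ← neg_smul, ← add_smul, sub_smul, add_smul, neg_smul]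
  abel

lemma key (S : Finset (Option (Fin ℓ))) (hS : S ≠ Finset.univ)
    (δ : V ℓ) (hδ : δ ∈ R.pos) (b : Option (Fin ℓ) → ℤ)
    (hrep : δ = ∑ i ∈ S, (b i : ℝ) • R.ext i) :
    (∃ d : Option (Fin ℓ) → ℕ, δ = ∑ i ∈ S, (d i : ℝ) • R.ext i) ∨
    (∃ d : Option (Fin ℓ) → ℕ, δ = -∑ i ∈ S, (d i : ℝ) • R.ext i) := by
  obtain ⟨d, hd⟩ := R.pos_comb δ hδ
  obtain ⟨e, he⟩ := R.highest_max δ hδ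
  -- d i ≤ c i
  have hdc : ∀ i, (d i : ℤ) ≤ R.c i := by
    intro i
    have h1 : ∑ i, ((R.c i : ℝ) - d i) • R.simple i = ∑ i, (e i : ℝ) • R.simple i := by
      simp only [sub_smul, Finset.sum_sub_distrib, ← R.highest_eq, ← hd, he]
    have := R.coeff_match' _ _ h1 i
    have h2 : (d i : ℝ) ≤ R.c i := by
      have h4 : (0:ℝ) ≤ (e i : ℝ) := Nat.cast_nonneg _
      linarith
    exact_mod_cast h2
  set a : ℤ := if none ∈ S then b none else 0 with ha
  -- coefficient matching
  have K : ∀ i, (d i : ℤ) = (if some i ∈ S then b (some i) else 0) - a * R.c i := by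
    intro i
    have h2 := R.sum_S S (fun i => (b i : ℝ))
    rw [← hrep, hd] at h2
    have h3 := R.coeff_match' _ _ h2 i
    have : ((if some i ∈ S then b (some i) else 0 : ℤ) : ℝ)
        = (if some i ∈ S then ((b (some i) : ℝ)) else 0) := by split <;> simp
    rw [← this] at h3
    have ha' : ((a : ℤ) : ℝ) = (if none ∈ S then ((b none : ℝ)) else 0) := by
      rw [ha]; split <;> simp
    rw [← ha'] at h3
    exact_mod_cast h3
  have hanonneg : a ≤ 0 := by
    by_cases hn : none ∈ S
    · obtain ⟨j, hj⟩ : ∃ j, j ∉ S := by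
        by_contra h; push_neg at h; exact hS (Finset.eq_univ_iff_forall.mpr h)
      match j with
      | none => exact absurd hn hj
      | some i₀ =>
          have := K i₀
          rw [if_neg hj] at this
          have hc : (0:ℤ) < R.c i₀ := by exact_mod_cast R.c_pos i₀
          nlinarith [Int.ofNat_nonneg (d i₀), this]
    · simp [ha, hn]
  rcases eq_or_lt_of_le hanonneg with haz | haz
  · -- a = 0
    left
    refine ⟨fun o => match o with | none => 0 | some i => d i, ?_⟩
    rw [hd, R.sum_S S (fun o => ((match o with | none => 0 | some i => d i : ℕ) : ℝ))]
    refine Finset.sum_congr rfl fun i _ => ?_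
    congr 1
    have hK := K i
    rw [haz, zero_mul, sub_zero] at hK
    show (d i : ℝ)
        = (if some i ∈ S then ((d i : ℕ) : ℝ) else 0)
          - (if none ∈ S then ((0 : ℕ) : ℝ) else 0) * (R.c i : ℝ)
    simp only [Nat.cast_zero, ite_self, zero_mul, sub_zero]
    by_cases hi : some i ∈ S
    · rw [if_pos hi]
    · rw [if_neg hi] at hK ⊢
      have : d i = 0 := by exact_mod_cast hK
      simp [this]
  · -- a < 0
    right
    have hnS : none ∈ S := by
      by_contra hn; rw [ha, if_neg hn] at haz; exact absurd rfl haz.ne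
    refine ⟨fun o => match o with
      | none => (-a).toNat
      | some i => ((-a) * R.c i - d i).toNat, ?_⟩
    rw [hd, R.sum_S S _, ← Finset.sum_neg_distrib]
    refine Finset.sum_congr rfl fun i _ => ?_
    rw [← neg_smul]
    congr 1
    have hK := K i
    have hcast : (((-a).toNat : ℕ) : ℝ) = ((-a : ℤ) : ℝ) := by
      exact_mod_cast congrArg (fun z : ℤ => (z : ℝ)) (Int.toNat_of_nonneg (by omega : (0:ℤ) ≤ -a))
    show (d i : ℝ)
        = -((if some i ∈ S then (((((-a) * R.c i - d i).toNat : ℕ)) : ℝ) else 0)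
          - (if none ∈ S then (((-a).toNat : ℕ) : ℝ) else 0) * (R.c i : ℝ))
    rw [if_pos hnS, hcast]
    by_cases hi : some i ∈ S
    · rw [if_pos hi] at hK ⊢
      have hle : (d i : ℤ) ≤ (-a) * R.c i := by
        have h1 := hdc i
        have hc0 : (0:ℤ) ≤ R.c i := Int.ofNat_nonneg _
        nlinarith
      have htn : ((((-a) * R.c i - d i).toNat : ℕ) : ℝ) = (((-a) * R.c i - d i : ℤ) : ℝ) := by
        exact_mod_cast congrArg (fun z : ℤ => (z : ℝ))
          (Int.toNat_of_nonneg (by omega : (0:ℤ) ≤ (-a) * R.c i - d i))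
      rw [htn]
      push_cast
      have : (d i : ℝ) = (b (some i) : ℝ) - (a : ℝ) * (R.c i : ℝ) := by exact_mod_cast hK
      linarith
    · rw [if_neg hi] at hK ⊢
      have : (d i : ℝ) = -(a : ℝ) * (R.c i : ℝ) := by
        rw [zero_sub, neg_mul_eq_neg_mul] at hK
        exact_mod_cast hK
      push_cast
      linarith

end RootSystemData

/-- a proper subset `𝒥 ⊊ Δ̃` is a base for `Φ_𝒥(ℤ) = Φ ∩ ℤ𝒥`: every root that is
an integral combination of `𝒥` is a nonnegative or nonpositive integral combination of `𝒥`. -/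
theorem proper_subset_of_extended_base_is_base {ℓ : ℕ} (R : RootSystemData ℓ)
    (S : Finset (Option (Fin ℓ))) (hS : S ≠ Finset.univ) :
    ∀ γ ∈ R.Φ, γ ∈ Submodule.span ℤ (R.ext '' ↑S) →
      (∃ d : Option (Fin ℓ) → ℕ, γ = ∑ i ∈ S, (d i : ℝ) • R.ext i) ∨
      (∃ d : Option (Fin ℓ) → ℕ, γ = -∑ i ∈ S, (d i : ℝ) • R.ext i) := by
  intro γ hγ hmem
  obtain ⟨b, hb⟩ := R.exists_int_rep S γ hmem
  by_cases hp : γ ∈ R.pos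
  · exact R.key S hS γ hp b hb
  · have hneg : -γ ∈ R.pos := by
      by_contra h
      exact hp ((R.pos_choice γ hγ).mpr (by simpa using h))
    have hb' : -γ = ∑ i ∈ S, (((-b i : ℤ)) : ℝ) • R.ext i := by
      rw [hb, ← Finset.sum_neg_distrib]
      refine Finset.sum_congr rfl fun i _ => ?_
      push_cast
      rw [neg_smul]
    rcases R.key S hS (-γ) hneg (fun i => -b i) hb' with ⟨d, hd⟩ | ⟨d, hd⟩
    · right; exact ⟨d, by rw [← hd, neg_neg]⟩
    · left; exact ⟨d, neg_injective hd⟩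
end
end

section
/- (Worpitzky partition) The fundamental parallelepiped P^◊ = Σ_{i=1}^ℓ (0,1] ϖ_i^∨ is the disjoint union of the partial closures A_i^◊ of the N = #W/f alcoves A_i^∘ contained in P^◊, where the partial closure of an alcove {x : (α,x) > k_α (α ∈ I), (β,x) < k_β (β ∈ J)} is obtained by replacing each strict inequality (β,x) < k_β with (β,x) ≤ k_β. -/
open scoped RealInnerProductSpace Classical BigOperators

noncomputable section

namespace WorpitzkyAux

open RootSystemData Set Filter

variable {ℓ : ℕ} (R : RootSystemData ℓ)

lemma inner_cont (α : V ℓ) : Continuous fun x : V ℓ => ⟪α, x⟫ :=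
  continuous_const.inner continuous_id

/-- There is a vector having positive inner product with every positive root. -/
lemma exists_delta : ∃ δ : V ℓ, ∀ α ∈ R.pos, 0 < ⟪α, δ⟫ := by
  rcases isEmpty_or_nonempty (Fin ℓ) with hE | hN
  · refine ⟨0, fun α hα => absurd (R.pos_subset hα) ?_⟩
    have : α = 0 := Subsingleton.elim α 0
    rw [this]
    exact R.nonzero
  have hcard : Fintype.card (Fin ℓ) = Module.finrank ℝ (V ℓ) := by
    simp [finrank_euclideanSpace]
  let b : Module.Basis (Fin ℓ) ℝ (V ℓ) := basisOfLinearIndependentOfCardEqFinrank R.simple_indep hcard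
  have hb : ∀ i, b i = R.simple i := fun i =>
    congrFun (coe_basisOfLinearIndependentOfCardEqFinrank R.simple_indep hcard) i
  set φ : V ℓ →ₗ[ℝ] ℝ := ∑ i, b.coord i with hφ
  refine ⟨(InnerProductSpace.toDual ℝ (V ℓ)).symm (LinearMap.toContinuousLinearMap φ), ?_⟩
  have key : ∀ i, ⟪R.simple i,
      (InnerProductSpace.toDual ℝ (V ℓ)).symm (LinearMap.toContinuousLinearMap φ)⟫ = 1 := by
    intro i
    rw [real_inner_comm, InnerProductSpace.toDual_symm_apply]
    have : (LinearMap.toContinuousLinearMap φ) (R.simple i) = φ (R.simple i) := rfl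
    rw [this, hφ, LinearMap.sum_apply]
    have : ∀ j, (b.coord j) (R.simple i) = if i = j then 1 else 0 := by
      intro j
      rw [← hb i, Module.Basis.coord_apply, Module.Basis.repr_self, Finsupp.single_apply]
    simp [this]
  intro α hα
  obtain ⟨d, hd⟩ := R.pos_comb α hα
  have hsum : ⟪α, (InnerProductSpace.toDual ℝ (V ℓ)).symm (LinearMap.toContinuousLinearMap φ)⟫
      = ∑ i, (d i : ℝ) := by
    rw [hd, sum_inner]
    congr 1; ext i
    rw [real_inner_smul_left, key i, mul_one]
  rw [hsum]
  have hne : α ≠ 0 := fun h => R.nonzero (h ▸ R.pos_subset hα)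
  have hex : ∃ i ∈ Finset.univ, (0:ℝ) < (d i : ℝ) := by
    by_contra h
    push_neg at h
    have hz : ∀ i, d i = 0 := by
      intro i
      have := h i (Finset.mem_univ i)
      exact_mod_cast le_antisymm (by exact_mod_cast this) (Nat.zero_le _)
    apply hne
    rw [hd]
    simp [hz]
  exact Finset.sum_pos' (fun i _ => by positivity) hex

/-- Explicit description of the connected components of the hyperplane-arrangement
complement. -/
lemma comp_eq (w : V ℓ) (hw : w ∈ R.AffC) :
    connectedComponentIn R.AffC w =
      {z | ∀ α ∈ R.pos, ((⌊⟪α, w⟫⌋ : ℝ) < ⟪α, z⟫ ∧ ⟪α, z⟫ < (⌊⟪α, w⟫⌋ : ℝ) + 1)} := by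
  have hwf : ∀ α ∈ R.pos, (⌊⟪α, w⟫⌋ : ℝ) < ⟪α, w⟫ ∧ ⟪α, w⟫ < (⌊⟪α, w⟫⌋ : ℝ) + 1 := by
    intro α hα
    refine ⟨lt_of_le_of_ne (Int.floor_le _) fun h => hw α hα ⌊⟪α, w⟫⌋ h.symm, Int.lt_floor_add_one _⟩
  apply Set.Subset.antisymm
  · intro z hz α hα
    have hK : IsPreconnected (connectedComponentIn R.AffC w) := isPreconnected_connectedComponentIn
    have hsub : connectedComponentIn R.AffC w ⊆ R.AffC := connectedComponentIn_subset R.AffC w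
    have hwK : w ∈ connectedComponentIn R.AffC w := mem_connectedComponentIn hw
    have hcont : ContinuousOn (fun v : V ℓ => ⟪α, v⟫) (connectedComponentIn R.AffC w) :=
      (inner_cont α).continuousOn
    constructor
    · by_contra h
      push_neg at h
      have hmem : (⌊⟪α, w⟫⌋ : ℝ) ∈ Set.Icc ⟪α, z⟫ ⟪α, w⟫ := ⟨h, Int.floor_le _⟩
      obtain ⟨u, hu, hueq⟩ := hK.intermediate_value hz hwK hcont hmem
      exact hsub hu α hα ⌊⟪α, w⟫⌋ hueq
    · by_contra h
      push_neg at h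
      have hmem : ((⌊⟪α, w⟫⌋ + 1 : ℤ) : ℝ) ∈ Set.Icc ⟪α, w⟫ ⟪α, z⟫ := by
        push_cast
        exact ⟨le_of_lt (hwf α hα).2, by linarith⟩
      obtain ⟨u, hu, hueq⟩ := hK.intermediate_value hwK hz hcont hmem
      exact hsub hu α hα (⌊⟪α, w⟫⌋ + 1) hueq
  · set S := {z | ∀ α ∈ R.pos, ((⌊⟪α, w⟫⌋ : ℝ) < ⟪α, z⟫ ∧ ⟪α, z⟫ < (⌊⟪α, w⟫⌋ : ℝ) + 1)} with hS
    have hconv : Convex ℝ S := by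
      have : S = ⋂ α ∈ R.pos,
          ((innerSL ℝ α : V ℓ →L[ℝ] ℝ) ⁻¹' Set.Ioo ((⌊⟪α, w⟫⌋ : ℝ)) ((⌊⟪α, w⟫⌋ : ℝ) + 1)) := by
        ext z
        simp [hS, Set.mem_iInter, Set.mem_Ioo]
      rw [this]
      exact convex_iInter₂ fun α _ =>
        (convex_Ioo _ _).linear_preimage (innerSL ℝ α : V ℓ →L[ℝ] ℝ).toLinearMap
    have hSA : S ⊆ R.AffC := by
      intro z hz α hα m hm
      obtain ⟨h1, h2⟩ := hz α hα
      rw [hm] at h1 h2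
      have e1 : ⌊⟪α, w⟫⌋ < m := by exact_mod_cast h1
      have e2 : (m : ℝ) < ((⌊⟪α, w⟫⌋ + 1 : ℤ) : ℝ) := by push_cast; linarith
      have e2' : m < ⌊⟪α, w⟫⌋ + 1 := by exact_mod_cast e2
      omega
    have hwS : w ∈ S := fun α hα => hwf α hα
    exact hconv.isPreconnected.subset_connectedComponentIn hwS hSA

/-- An alcove is determined by any point of its partial closure. -/
lemma alcove_eq_of_mem_pc {A : Set (V ℓ)} (hA : R.IsAlcove A) {x : V ℓ} (hx : x ∈ R.pc A) :
    A = {z | ∀ α ∈ R.pos, ((⌈⟪α, x⟫⌉ : ℝ) - 1 < ⟪α, z⟫ ∧ ⟪α, z⟫ < (⌈⟪α, x⟫⌉ : ℝ))} := by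
  obtain ⟨w, hw, hAeq⟩ := hA
  have hdesc := comp_eq R w hw
  have hwA : w ∈ A := hAeq ▸ mem_connectedComponentIn hw
  have hint : ∀ α ∈ R.pos, ⌊⟪α, w⟫⌋ = ⌈⟪α, x⟫⌉ - 1 := by
    intro α hα
    set m : ℤ := ⌊⟪α, w⟫⌋ with hm
    have hAsub : A ⊆ {z | ⟪α, z⟫ ≤ (m : ℝ) + 1} := by
      intro z hz
      have := (hAeq ▸ hz : z ∈ connectedComponentIn R.AffC w)
      rw [hdesc] at this
      exact le_of_lt (this α hα).2
    have hAsub' : A ⊆ {z | (m : ℝ) ≤ ⟪α, z⟫} := by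
      intro z hz
      have := (hAeq ▸ hz : z ∈ connectedComponentIn R.AffC w)
      rw [hdesc] at this
      exact le_of_lt (this α hα).1
    have hcl : ⟪α, x⟫ ≤ (m : ℝ) + 1 := by
      have : x ∈ {z : V ℓ | ⟪α, z⟫ ≤ (m : ℝ) + 1} :=
        closure_minimal hAsub (isClosed_le (inner_cont α) continuous_const) hx.1
      exact this
    have hcl' : (m : ℝ) ≤ ⟪α, x⟫ := by
      have : x ∈ {z : V ℓ | (m : ℝ) ≤ ⟪α, z⟫} :=
        closure_minimal hAsub' (isClosed_le continuous_const (inner_cont α)) hx.1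
      exact this
    have hne : ⟪α, x⟫ ≠ (m : ℝ) := by
      intro h
      have hlt := hx.2 α hα m h w hwA
      have : (m : ℝ) < ⟪α, w⟫ := by
        have := (hAeq ▸ hwA : w ∈ connectedComponentIn R.AffC w)
        rw [hdesc] at this
        exact (this α hα).1
      linarith
    have hceil : ⌈⟪α, x⟫⌉ = m + 1 := by
      rw [Int.ceil_eq_iff]
      constructor
      · push_cast
        have := lt_of_le_of_ne hcl' (Ne.symm hne)
        linarith
      · push_cast
        linarith
    omega
  rw [hAeq, hdesc]
  ext z
  constructor
  · intro hz α hα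
    obtain ⟨h1, h2⟩ := hz α hα
    have := hint α hα
    have hc : ((⌊⟪α, w⟫⌋ : ℤ) : ℝ) = ((⌈⟪α, x⟫⌉ : ℤ) : ℝ) - 1 := by
      rw [this]; push_cast; ring
    constructor <;> [linarith [hc ▸ h1]; linarith [hc ▸ h2]]
  · intro hz α hα
    obtain ⟨h1, h2⟩ := hz α hα
    have := hint α hα
    have hc : ((⌊⟪α, w⟫⌋ : ℤ) : ℝ) = ((⌈⟪α, x⟫⌉ : ℤ) : ℝ) - 1 := by
      rw [this]; push_cast; ring
    constructor <;> [linarith; linarith]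

/-- The partial closure of an alcove contained in `P^◊` stays in `P^◊`. -/
lemma pc_subset_Pdia {A : Set (V ℓ)} (hA : R.IsAlcove A) (hsub : A ⊆ R.Pdia) :
    R.pc A ⊆ R.Pdia := by
  obtain ⟨w, hw, hAeq⟩ := hA
  have hwA : w ∈ A := hAeq ▸ mem_connectedComponentIn hw
  intro x hx i
  have hup : ⟪R.simple i, x⟫ ≤ 1 := by
    have : x ∈ {z : V ℓ | ⟪R.simple i, z⟫ ≤ 1} :=
      closure_minimal (fun z hz => (hsub hz i).2)
        (isClosed_le (inner_cont _) continuous_const) hx.1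
    exact this
  have hlo : 0 ≤ ⟪R.simple i, x⟫ := by
    have : x ∈ {z : V ℓ | 0 ≤ ⟪R.simple i, z⟫} :=
      closure_minimal (fun z hz => le_of_lt (hsub hz i).1)
        (isClosed_le continuous_const (inner_cont _)) hx.1
    exact this
  refine ⟨lt_of_le_of_ne hlo ?_, hup⟩
  intro h
  have h2 := hx.2 (R.simple i) (R.simple_mem i) 0 (by rw [← h]; norm_num) w hwA
  have hw0 := (hsub hwA i).1
  have h0 : ((0 : ℤ) : ℝ) = 0 := by norm_num
  rw [h0] at h2
  linarith

/-- Every point of `P^◊` lies in the partial closure of an alcove contained in `P^◊`. -/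
lemma exists_alcove (x : V ℓ) (hx : x ∈ R.Pdia) :
    ∃ A : Set (V ℓ), R.IsAlcove A ∧ A ⊆ R.Pdia ∧ x ∈ R.pc A := by
  obtain ⟨δ, hδ⟩ := exists_delta R
  have hfin : R.pos.Finite := R.finite.subset R.pos_subset
  have hxpos : ∀ α ∈ R.pos, (⌈⟪α, x⟫⌉ : ℝ) - 1 < ⟪α, x⟫ := fun α hα => by
    have := Int.ceil_lt_add_one (⟪α, x⟫); linarith
  obtain ⟨ε, hε, hεlt⟩ : ∃ ε > 0, ∀ α ∈ R.pos,
      ε * ⟪α, δ⟫ < ⟪α, x⟫ - ((⌈⟪α, x⟫⌉ : ℝ) - 1) := by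
    rcases hfin.toFinset.eq_empty_or_nonempty with he | hne
    · exact ⟨1, one_pos, fun α hα => absurd (hfin.mem_toFinset.mpr hα) (by simp [he])⟩
    · set g : V ℓ → ℝ := fun α => (⟪α, x⟫ - ((⌈⟪α, x⟫⌉ : ℝ) - 1)) / ⟪α, δ⟫ with hg
      have hgpos : ∀ α ∈ hfin.toFinset, 0 < g α := fun α hα => by
        have hα' := hfin.mem_toFinset.mp hα
        exact div_pos (by linarith [hxpos α hα']) (hδ α hα')
      have hinfpos : 0 < hfin.toFinset.inf' hne g := by
        rw [Finset.lt_inf'_iff]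
        exact hgpos
      refine ⟨hfin.toFinset.inf' hne g / 2, by linarith, ?_⟩
      intro α hα
      have hmem := hfin.mem_toFinset.mpr hα
      have h1 : hfin.toFinset.inf' hne g / 2 < g α := by
        have h2 := Finset.inf'_le g hmem
        have h3 := hgpos α hmem
        linarith
      calc hfin.toFinset.inf' hne g / 2 * ⟪α, δ⟫ < g α * ⟪α, δ⟫ :=
            mul_lt_mul_of_pos_right h1 (hδ α hα)
        _ = ⟪α, x⟫ - ((⌈⟪α, x⟫⌉ : ℝ) - 1) := div_mul_cancel₀ _ (ne_of_gt (hδ α hα))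
  set x' := x - ε • δ with hx'def
  have hval : ∀ α : V ℓ, ⟪α, x'⟫ = ⟪α, x⟫ - ε * ⟪α, δ⟫ := fun α => by
    rw [hx'def, inner_sub_right, real_inner_smul_right]
  have hx'lo : ∀ α ∈ R.pos, (⌈⟪α, x⟫⌉ : ℝ) - 1 < ⟪α, x'⟫ := fun α hα => by
    rw [hval]; linarith [hεlt α hα]
  have hx'hi : ∀ α ∈ R.pos, ⟪α, x'⟫ < (⌈⟪α, x⟫⌉ : ℝ) := fun α hα => by
    rw [hval]
    have h1 : 0 < ε * ⟪α, δ⟫ := mul_pos hε (hδ α hα)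
    have h2 : ⟪α, x⟫ ≤ (⌈⟪α, x⟫⌉ : ℝ) := Int.le_ceil _
    linarith
  have hx'A : x' ∈ R.AffC := by
    intro α hα m hm
    have h1 := hx'lo α hα
    have h2 := hx'hi α hα
    rw [hm] at h1 h2
    have e1 : ((⌈⟪α, x⟫⌉ - 1 : ℤ) : ℝ) < (m : ℝ) := by push_cast; linarith
    have e1' : ⌈⟪α, x⟫⌉ - 1 < m := by exact_mod_cast e1
    have e2' : m < ⌈⟪α, x⟫⌉ := by exact_mod_cast h2
    omega
  have hfloor : ∀ α ∈ R.pos, ⌊⟪α, x'⟫⌋ = ⌈⟪α, x⟫⌉ - 1 := fun α hα => by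
    rw [Int.floor_eq_iff]
    constructor
    · push_cast; linarith [hx'lo α hα]
    · push_cast; linarith [hx'hi α hα]
  have hdesc : connectedComponentIn R.AffC x' =
      {z | ∀ α ∈ R.pos, ((⌈⟪α, x⟫⌉ : ℝ) - 1 < ⟪α, z⟫ ∧ ⟪α, z⟫ < (⌈⟪α, x⟫⌉ : ℝ))} := by
    rw [comp_eq R x' hx'A]
    ext z
    simp only [Set.mem_setOf_eq]
    refine forall₂_congr fun α hα => ?_
    rw [hfloor α hα]
    push_cast
    constructor
    · intro h; exact ⟨h.1, by linarith [h.2]⟩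
    · intro h; exact ⟨h.1, by linarith [h.2]⟩
  refine ⟨connectedComponentIn R.AffC x', ⟨x', hx'A, rfl⟩, ?_, ?_, ?_⟩
  · intro z hz
    rw [hdesc] at hz
    intro i
    have hi := hz (R.simple i) (R.simple_mem i)
    have hc1 : ⌈⟪R.simple i, x⟫⌉ = 1 := by
      rw [Int.ceil_eq_iff]
      constructor
      · push_cast; linarith [(hx i).1]
      · push_cast; exact (hx i).2
    rw [hc1] at hi
    push_cast at hi
    exact ⟨by linarith [hi.1], le_of_lt hi.2⟩
  · -- x ∈ closure of the alcove
    have hseq : ∀ n : ℕ, x - (ε / (n + 1)) • δ ∈ connectedComponentIn R.AffC x' := by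
      intro n
      rw [hdesc]
      intro α hα
      have ht0 : 0 < ε / ((n : ℝ) + 1) := div_pos hε (by positivity)
      have ht1 : ε / ((n : ℝ) + 1) ≤ ε := by
        apply div_le_self (le_of_lt hε)
        have h1 : (1 : ℝ) ≤ (n : ℝ) + 1 := by
          have : (0 : ℝ) ≤ (n : ℝ) := Nat.cast_nonneg n
          linarith
        exact h1
      have hv : ⟪α, x - (ε / ((n : ℝ) + 1)) • δ⟫ = ⟪α, x⟫ - (ε / ((n : ℝ) + 1)) * ⟪α, δ⟫ := by
        rw [inner_sub_right, real_inner_smul_right]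
      rw [hv]
      have hδα := hδ α hα
      have hmono : (ε / ((n : ℝ) + 1)) * ⟪α, δ⟫ ≤ ε * ⟪α, δ⟫ :=
        mul_le_mul_of_nonneg_right ht1 (le_of_lt hδα)
      have hlt := hεlt α hα
      have hle := Int.le_ceil ⟪α, x⟫
      have hpos := mul_pos ht0 hδα
      exact ⟨by linarith, by linarith⟩
    have htend : Filter.Tendsto (fun n : ℕ => x - (ε / ((n : ℝ) + 1)) • δ)
        Filter.atTop (nhds x) := by
      have h0 : Filter.Tendsto (fun n : ℕ => ε / ((n : ℝ) + 1)) Filter.atTop (nhds 0) := by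
        have h1 := tendsto_one_div_add_atTop_nhds_zero_nat.const_mul ε
        simpa [div_eq_mul_inv] using h1
      have h2 := Filter.Tendsto.sub
        (tendsto_const_nhds : Filter.Tendsto (fun _ : ℕ => x) Filter.atTop (nhds x))
        (h0.smul_const δ)
      simpa using h2
    exact mem_closure_of_tendsto htend (Filter.Eventually.of_forall hseq)
  · intro α hα m hm y hy
    rw [hdesc] at hy
    have h2 := (hy α hα).2
    have hce : ⌈⟪α, x⟫⌉ = m := by rw [hm]; exact Int.ceil_intCast m
    rw [hce] at h2
    exact h2

end WorpitzkyAux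

/-- Worpitzky partition: `P^◊` is the disjoint union of the partial closures of
the alcoves contained in `P^◊`. -/
theorem worpitzky_partition {ℓ : ℕ} (R : RootSystemData ℓ) :
    (⋃ A ∈ {A : Set (V ℓ) | R.IsAlcove A ∧ A ⊆ R.Pdia}, R.pc A) = R.Pdia ∧
    {A : Set (V ℓ) | R.IsAlcove A ∧ A ⊆ R.Pdia}.PairwiseDisjoint R.pc := by
  constructor
  · apply Set.Subset.antisymm
    · intro x hx
      simp only [Set.mem_iUnion, Set.mem_setOf_eq, exists_prop] at hx
      obtain ⟨A, ⟨hAlc, hsub⟩, hxA⟩ := hx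
      exact WorpitzkyAux.pc_subset_Pdia R hAlc hsub hxA
    · intro x hx
      obtain ⟨A, h1, h2, h3⟩ := WorpitzkyAux.exists_alcove R x hx
      simp only [Set.mem_iUnion, Set.mem_setOf_eq, exists_prop]
      exact ⟨A, ⟨h1, h2⟩, h3⟩
  · intro A hA B hB hne
    rw [Function.onFun, Set.disjoint_left]
    intro x hxA hxB
    exact hne ((WorpitzkyAux.alcove_eq_of_mem_pc R hA.1 hxA).trans
      (WorpitzkyAux.alcove_eq_of_mem_pc R hB.1 hxB).symm)
end
end

section
/- Let Φ be an irreducible root system with fundamental alcove A^∘ = {x : (α_i,x) > 0 (1 ≤ i ≤ ℓ), (α̃,x) < 1}. For all integers q, the Ehrhart counting functions with respect to the coweight lattice satisfy L_{A^∘}(q) = L_{Ā^∘}(q − h), where h is the Coxeter number. More generally, for {i₁,…,i_k} ⊆ {0,1,…,ℓ} and q > c_{i₁} + ⋯ + c_{i_k}, the number of coweight lattice points of q·Ā^∘ not lying on the facets F_{i₁},…,F_{i_k} equals L_{Ā^∘}(q − (c_{i₁} + ⋯ + c_{i_k})). -/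
open scoped RealInnerProductSpace Classical BigOperators

noncomputable section

namespace RootSystemData

variable {ℓ : ℕ} (R : RootSystemData ℓ)

lemma span_simple : Submodule.span ℝ (Set.range R.simple) = ⊤ := by
  rcases Nat.eq_zero_or_pos ℓ with h0 | h0
  · subst h0
    have : Subsingleton (V 0) := by
      constructor; intro a b; ext i; exact absurd i.2 (by omega)
    exact Subsingleton.elim _ _
  · have : Nonempty (Fin ℓ) := ⟨⟨0, h0⟩⟩
    have hc : Fintype.card (Fin ℓ) = Module.finrank ℝ (V ℓ) := by simp
    have h1 : ⇑(basisOfLinearIndependentOfCardEqFinrank R.simple_indep hc) = R.simple :=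
      coe_basisOfLinearIndependentOfCardEqFinrank _ _
    rw [← h1]; exact (basisOfLinearIndependentOfCardEqFinrank R.simple_indep hc).span_eq

lemma eq_zero_of_inner_simple (x : V ℓ) (h : ∀ i, ⟪R.simple i, x⟫ = 0) : x = 0 := by
  have hx : x ∈ (Submodule.span ℝ (Set.range R.simple))ᗮ := by
    rw [Submodule.mem_orthogonal]
    intro u hu
    induction hu using Submodule.span_induction with
    | mem u hu => obtain ⟨i, rfl⟩ := hu; exact h i
    | zero => simp
    | add u v _ _ hu hv => simp [inner_add_left, hu, hv]
    | smul a u _ hu => simp [inner_smul_left, hu]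
  rw [R.span_simple, Submodule.top_orthogonal_eq_bot] at hx; simpa using hx

lemma exists_cwt (i : Fin ℓ) : ∃ v : V ℓ, ∀ j, ⟪R.simple j, v⟫ = if j = i then 1 else 0 := by
  have : Nonempty (Fin ℓ) := ⟨i⟩
  have hc : Fintype.card (Fin ℓ) = Module.finrank ℝ (V ℓ) := by simp
  set B := basisOfLinearIndependentOfCardEqFinrank R.simple_indep hc with hB
  have h1 : ⇑B = R.simple := coe_basisOfLinearIndependentOfCardEqFinrank _ _
  refine ⟨(InnerProductSpace.toDual ℝ (V ℓ)).symm
    (LinearMap.toContinuousLinearMap (B.dualBasis i)), fun j => ?_⟩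
  rw [real_inner_comm, InnerProductSpace.toDual_symm_apply]
  have h2 : B j = R.simple j := by rw [← h1]
  rw [← h2]
  simp [Module.Basis.dualBasis_apply_self, Finsupp.single_apply]

/-- fundamental coweights -/
def cwt (i : Fin ℓ) : V ℓ := (R.exists_cwt i).choose

lemma inner_cwt (i j : Fin ℓ) : ⟪R.simple j, R.cwt i⟫ = if j = i then 1 else 0 :=
  (R.exists_cwt i).choose_spec j

lemma mem_lat_iff (x : V ℓ) : x ∈ R.coweightLat ↔ ∀ i, ∃ n : ℤ, ⟪R.simple i, x⟫ = n :=
  Iff.rfl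

lemma mem_alcC_iff (x : V ℓ) : x ∈ R.alcC ↔ (∀ i, 0 ≤ ⟪R.simple i, x⟫) ∧ ⟪R.highest, x⟫ ≤ 1 :=
  Iff.rfl

lemma mem_alc_iff (x : V ℓ) : x ∈ R.alc ↔ (∀ i, 0 < ⟪R.simple i, x⟫) ∧ ⟪R.highest, x⟫ < 1 :=
  Iff.rfl

lemma inner_highest (x : V ℓ) : ⟪R.highest, x⟫ = ∑ i, (R.c i : ℝ) * ⟪R.simple i, x⟫ := by
  rw [R.highest_eq, sum_inner]
  simp [real_inner_smul_left, PiLp.inner_apply, Finset.mul_sum, mul_assoc]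
  exact Finset.sum_congr rfl fun _ _ => Finset.sum_congr rfl fun _ _ => by ring

lemma highest_int (x : V ℓ) (hx : x ∈ R.coweightLat) : ∃ N : ℤ, ⟪R.highest, x⟫ = N := by
  rw [R.mem_lat_iff] at hx
  choose n hn using hx
  refine ⟨∑ i, (R.c i : ℤ) * n i, ?_⟩
  rw [R.inner_highest]
  push_cast
  exact Finset.sum_congr rfl fun i _ => by rw [hn i]

lemma zero_mem_alcC : (0 : V ℓ) ∈ R.alcC := ⟨fun i => by simp, by simp⟩

lemma dilate (r : ℤ) (hr : 0 ≤ r) (x : V ℓ) :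
    (∃ y ∈ R.alcC, x = (r : ℝ) • y) ↔
      (∀ i, 0 ≤ ⟪R.simple i, x⟫) ∧ ⟪R.highest, x⟫ ≤ (r : ℝ) := by
  rcases lt_or_eq_of_le hr with h | h
  · have hr' : (0 : ℝ) < (r : ℝ) := by exact_mod_cast h
    constructor
    · rintro ⟨y, ⟨hy1, hy2⟩, rfl⟩
      refine ⟨fun i => ?_, ?_⟩
      · rw [real_inner_smul_right]; exact mul_nonneg hr'.le (hy1 i)
      · rw [real_inner_smul_right]
        calc (r : ℝ) * ⟪R.highest, y⟫ ≤ (r : ℝ) * 1 :=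
              mul_le_mul_of_nonneg_left hy2 hr'.le
          _ = (r : ℝ) := mul_one _
    · rintro ⟨h1, h2⟩
      refine ⟨(r : ℝ)⁻¹ • x, ⟨fun i => ?_, ?_⟩, ?_⟩
      · rw [real_inner_smul_right]; exact mul_nonneg (inv_nonneg.mpr hr'.le) (h1 i)
      · rw [real_inner_smul_right]
        have := mul_le_mul_of_nonneg_left h2 (inv_nonneg.mpr hr'.le)
        simpa [inv_mul_cancel₀ hr'.ne'] using this
      · rw [smul_smul, mul_inv_cancel₀ hr'.ne', one_smul]
  · rw [← h]
    constructor
    · rintro ⟨y, hy, rfl⟩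
      simp
    · rintro ⟨h1, h2⟩
      have hz : ∀ i, ⟪R.simple i, x⟫ = 0 := by
        have hterm : ∀ i ∈ Finset.univ, (0:ℝ) ≤ (R.c i : ℝ) * ⟪R.simple i, x⟫ :=
          fun i _ => mul_nonneg (by positivity) (h1 i)
        have hsum0 : ∑ i, (R.c i : ℝ) * ⟪R.simple i, x⟫ = 0 := by
          refine le_antisymm ?_ (Finset.sum_nonneg hterm)
          rw [← R.inner_highest]
          simpa using h2
        intro i
        have := (Finset.sum_eq_zero_iff_of_nonneg hterm).mp hsum0 i (Finset.mem_univ i)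
        rcases mul_eq_zero.mp this with hc | ht
        · exact absurd hc (by have := R.c_pos i; positivity)
        · exact ht
      have hx0 : x = 0 := R.eq_zero_of_inner_simple x hz
      exact ⟨0, R.zero_mem_alcC, by simp [hx0]⟩

lemma dilate_alc (r : ℤ) (hr : 0 < r) (x : V ℓ) :
    (∃ y ∈ R.alc, x = (r : ℝ) • y) ↔
      (∀ i, 0 < ⟪R.simple i, x⟫) ∧ ⟪R.highest, x⟫ < (r : ℝ) := by
  have hr' : (0 : ℝ) < (r : ℝ) := by exact_mod_cast hr
  constructor
  · rintro ⟨y, ⟨hy1, hy2⟩, rfl⟩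
    refine ⟨fun i => ?_, ?_⟩
    · rw [real_inner_smul_right]; exact mul_pos hr' (hy1 i)
    · rw [real_inner_smul_right]
      calc (r : ℝ) * ⟪R.highest, y⟫ < (r : ℝ) * 1 :=
            (mul_lt_mul_iff_right₀ hr').mpr hy2
        _ = (r : ℝ) := mul_one _
  · rintro ⟨h1, h2⟩
    refine ⟨(r : ℝ)⁻¹ • x, ⟨fun i => ?_, ?_⟩, ?_⟩
    · rw [real_inner_smul_right]; exact mul_pos (inv_pos.mpr hr') (h1 i)
    · rw [real_inner_smul_right]
      have := mul_lt_mul_of_pos_left h2 (inv_pos.mpr hr')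
      simpa [inv_mul_cancel₀ hr'.ne'] using this
    · rw [smul_smul, mul_inv_cancel₀ hr'.ne', one_smul]

lemma key_s7 (S : Finset (Option (Fin ℓ))) (q : ℤ) (hq : (∑ i ∈ S, (R.cExt i : ℤ)) ≤ q) :
    Set.ncard {x : V ℓ | x ∈ R.coweightLat ∧ (∃ y ∈ R.alcC, x = (q : ℝ) • y) ∧
        ∀ i ∈ S, Option.elim i (⟪R.highest, x⟫ ≠ (q : ℝ)) (fun j => ⟪R.simple j, x⟫ ≠ 0)} =
      Set.ncard {x : V ℓ | x ∈ R.coweightLat ∧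
        ∃ y ∈ R.alcC, x = ((q - ∑ i ∈ S, (R.cExt i : ℤ) : ℤ) : ℝ) • y} := by
  set m : ℤ := ∑ i ∈ S, (R.cExt i : ℤ) with hm
  have hm0 : 0 ≤ m := Finset.sum_nonneg fun i _ => by positivity
  have hq0 : (0 : ℤ) ≤ q := le_trans hm0 hq
  set w : V ℓ := ∑ j : Fin ℓ, (if (some j) ∈ S then (1 : ℝ) else 0) • R.cwt j with hw
  have hwk : ∀ k, ⟪R.simple k, w⟫ = if (some k) ∈ S then 1 else 0 := by
    intro k
    rw [hw, inner_sum]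
    simp only [real_inner_smul_right, R.inner_cwt]
    rw [Finset.sum_eq_single k]
    · simp
    · intro j _ hj
      simp [if_neg (Ne.symm hj)]
    · intro hk; exact absurd (Finset.mem_univ k) hk
  have hwlat : w ∈ R.coweightLat := by
    rw [R.mem_lat_iff]
    intro k
    refine ⟨if some k ∈ S then 1 else 0, ?_⟩
    rw [hwk]; split <;> simp
  have hmsplit : m = (if none ∈ S then (1 : ℤ) else 0) +
      ∑ k : Fin ℓ, (if some k ∈ S then (R.c k : ℤ) else 0) := by
    have h1 : ∑ i ∈ S, (R.cExt i : ℤ) =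
        ∑ i : Option (Fin ℓ), (if i ∈ S then (R.cExt i : ℤ) else 0) := by
      rw [Finset.sum_ite_mem, Finset.univ_inter]
    rw [hm, h1, Fintype.sum_option]
    rfl
  have hwh : ⟪R.highest, w⟫ = (m : ℝ) - (if none ∈ S then 1 else 0) := by
    rw [R.inner_highest]
    simp only [hwk, mul_ite, mul_one, mul_zero]
    have h2 : (m : ℝ) = (if none ∈ S then (1 : ℝ) else 0) +
        ∑ k, (if some k ∈ S then (R.c k : ℝ) else 0) := by
      rw [hmsplit]
      push_cast [apply_ite (fun z : ℤ => (z : ℝ))]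
      ring
    rw [h2]; ring
  have hiff : ∀ x : V ℓ,
      (x ∈ R.coweightLat ∧ (∃ y ∈ R.alcC, x = (q : ℝ) • y) ∧
        ∀ i ∈ S, Option.elim i (⟪R.highest, x⟫ ≠ (q : ℝ)) (fun j => ⟪R.simple j, x⟫ ≠ 0)) ↔
      (x - w ∈ R.coweightLat ∧ ∃ y ∈ R.alcC, x - w = ((q - m : ℤ) : ℝ) • y) := by
    intro x
    rw [R.dilate q hq0, R.dilate (q - m) (by omega)]
    have hk' : ∀ k, ⟪R.simple k, x - w⟫ =
        ⟪R.simple k, x⟫ - (if some k ∈ S then 1 else 0) := by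
      intro k; rw [inner_sub_right, hwk]
    have hh' : ⟪R.highest, x - w⟫ =
        ⟪R.highest, x⟫ - ((m : ℝ) - (if none ∈ S then 1 else 0)) := by
      rw [inner_sub_right, hwh]
    constructor
    · rintro ⟨hlat, ⟨h1, h2⟩, hS⟩
      refine ⟨R.coweightLat.sub_mem hlat hwlat, fun k => ?_, ?_⟩
      · rw [hk' k]
        by_cases hkS : some k ∈ S
        · have hne : ⟪R.simple k, x⟫ ≠ 0 := hS (some k) hkS
          obtain ⟨n, hn⟩ := (R.mem_lat_iff x).mp hlat k
          have h0n : (0 : ℝ) ≤ (n : ℝ) := hn ▸ h1 k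
          have hnn : (n : ℝ) ≠ 0 := hn ▸ hne
          have hge : (1 : ℝ) ≤ (n : ℝ) := by
            have a1 : (0 : ℤ) ≤ n := by exact_mod_cast h0n
            have a2 : n ≠ 0 := fun h => hnn (by rw [h]; simp)
            exact_mod_cast (by omega : (1 : ℤ) ≤ n)
          rw [hn, if_pos hkS]; linarith
        · rw [if_neg hkS]; simpa using h1 k
      · rw [hh']
        push_cast
        by_cases hnS : none ∈ S
        · have hne : ⟪R.highest, x⟫ ≠ (q : ℝ) := hS none hnS
          obtain ⟨N, hN⟩ := R.highest_int x hlat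
          have a1 : (N : ℝ) ≤ (q : ℝ) := hN ▸ h2
          have a2 : (N : ℝ) ≠ (q : ℝ) := hN ▸ hne
          have a3 : N ≤ q := by exact_mod_cast a1
          have a4 : N ≠ q := fun h => a2 (by rw [h])
          have a5 : (N : ℝ) ≤ (q : ℝ) - 1 := by
            have : N ≤ q - 1 := by omega
            have h6 : ((N : ℤ) : ℝ) ≤ ((q - 1 : ℤ) : ℝ) := by exact_mod_cast this
            push_cast at h6
            linarith
          rw [if_pos hnS, hN]; linarith
        · rw [if_neg hnS]; linarith
    · rintro ⟨hlat', h1', h2'⟩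
      have hlat : x ∈ R.coweightLat := by
        have h := R.coweightLat.add_mem hlat' hwlat
        simpa using h
      have hh2 : ⟪R.highest, x⟫ - ((m : ℝ) - (if none ∈ S then 1 else 0)) ≤ (q : ℝ) - (m : ℝ) := by
        have := h2'; rw [hh'] at this; push_cast at this; linarith
      refine ⟨hlat, ⟨fun k => ?_, ?_⟩, ?_⟩
      · have := h1' k; rw [hk' k] at this
        by_cases hkS : some k ∈ S
        · rw [if_pos hkS] at this; linarith
        · rw [if_neg hkS] at this; linarith
      · by_cases hnS : none ∈ S
        · rw [if_pos hnS] at hh2; linarith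
        · rw [if_neg hnS] at hh2; linarith
      · intro i hi
        match i with
        | none =>
          simp only [Option.elim]
          rw [if_pos hi] at hh2
          intro hcontra; rw [hcontra] at hh2; linarith
        | some j =>
          simp only [Option.elim]
          have := h1' j; rw [hk' j, if_pos hi] at this
          intro hcontra; rw [hcontra] at this; linarith
  have hinj : Function.Injective (fun x : V ℓ => x - w) := fun a b hab => by
    simpa using congrArg (fun z => z + w) hab
  rw [← Set.ncard_image_of_injective _ hinj]
  have himg : (fun x : V ℓ => x - w) ''
      {x : V ℓ | x ∈ R.coweightLat ∧ (∃ y ∈ R.alcC, x = (q : ℝ) • y) ∧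
        ∀ i ∈ S, Option.elim i (⟪R.highest, x⟫ ≠ (q : ℝ)) (fun j => ⟪R.simple j, x⟫ ≠ 0)} =
      {x : V ℓ | x ∈ R.coweightLat ∧ ∃ y ∈ R.alcC, x = ((q - m : ℤ) : ℝ) • y} := by
    ext z
    simp only [Set.mem_image, Set.mem_setOf_eq]
    constructor
    · rintro ⟨x, hx, rfl⟩
      exact (hiff x).mp hx
    · intro hz
      refine ⟨z + w, (hiff (z + w)).mpr ?_, by simp⟩
      rw [add_sub_cancel_right]
      exact hz
  rw [himg]

end RootSystemData

/-- `L_{A^∘}(q) = L_{Ā^∘}(q - h)`, and more generally removing the facets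
indexed by a subset `S ⊆ {0,1,…,ℓ}` from `q Ā^∘` leaves `L_{Ā^∘}(q - ∑_{i ∈ S} c_i)`
coweight lattice points, provided `q > ∑_{i ∈ S} c_i`. -/
theorem ehrhart_alcove_facet_removal {ℓ : ℕ} (R : RootSystemData ℓ) :
    (∀ q : ℤ, 1 ≤ q → R.LP R.alc q = R.LP R.alcC (q - R.coxh)) ∧
    (∀ (S : Finset (Option (Fin ℓ))) (q : ℤ), (∑ i ∈ S, (R.cExt i : ℤ)) < q →
      Set.ncard {x : V ℓ | x ∈ R.coweightLat ∧ (∃ y ∈ R.alcC, x = (q : ℝ) • y) ∧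
          ∀ i ∈ S, Option.elim i (⟪R.highest, x⟫ ≠ (q : ℝ)) (fun j => ⟪R.simple j, x⟫ ≠ 0)} =
        R.LP R.alcC (q - ∑ i ∈ S, (R.cExt i : ℤ))) := by
  constructor
  · intro q hq1
    have hcox : (R.coxh : ℤ) = ∑ i ∈ Finset.univ, (R.cExt i : ℤ) := by
      rw [RootSystemData.coxh]; push_cast; rfl
    rcases le_or_gt (R.coxh : ℤ) q with hge | hlt
    · have hkey := R.key_s7 Finset.univ q (by rw [← hcox]; exact hge)
      have hq0 : (0 : ℤ) ≤ q := by omega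
      have hqpos : (0 : ℤ) < q := by omega
      have hseteq : {x : V ℓ | x ∈ R.coweightLat ∧ (∃ y ∈ R.alcC, x = (q : ℝ) • y) ∧
          ∀ i ∈ (Finset.univ : Finset (Option (Fin ℓ))), Option.elim i
            (⟪R.highest, x⟫ ≠ (q : ℝ)) (fun j => ⟪R.simple j, x⟫ ≠ 0)} =
          {x : V ℓ | x ∈ R.coweightLat ∧ ∃ y ∈ R.alc, x = (q : ℝ) • y} := by
        ext x
        simp only [Set.mem_setOf_eq]
        rw [R.dilate q hq0, R.dilate_alc q hqpos]
        constructor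
        · rintro ⟨hlat, ⟨h1, h2⟩, hS⟩
          exact ⟨hlat, fun i => lt_of_le_of_ne (h1 i)
            (Ne.symm (hS (some i) (Finset.mem_univ _))),
            lt_of_le_of_ne h2 (hS none (Finset.mem_univ _))⟩
        · rintro ⟨hlat, h1, h2⟩
          refine ⟨hlat, ⟨fun i => (h1 i).le, h2.le⟩, ?_⟩
          intro i _
          match i with
          | none => exact ne_of_lt h2
          | some j => exact (h1 j).ne'
      simp only [RootSystemData.LP]
      rw [if_neg (by omega : ¬ q < 0), if_neg (by omega : ¬ q - (R.coxh : ℤ) < 0),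
        ← hseteq, hkey, hcox]
    · have hrhs : R.LP R.alcC (q - R.coxh) = 0 := by
        simp only [RootSystemData.LP]
        rw [if_pos (by omega)]
      rw [hrhs]
      simp only [RootSystemData.LP]
      rw [if_neg (by omega : ¬ q < 0)]
      have hempty : {x : V ℓ | x ∈ R.coweightLat ∧ ∃ y ∈ R.alc, x = (q : ℝ) • y} = ∅ := by
        ext x
        simp only [Set.mem_setOf_eq, Set.mem_empty_iff_false, iff_false, not_and]
        intro hlat hdy
        rw [R.dilate_alc q (by omega)] at hdy
        obtain ⟨h1, h2⟩ := hdy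
        have hge1 : ∀ i, (1 : ℝ) ≤ ⟪R.simple i, x⟫ := by
          intro i
          obtain ⟨n, hn⟩ := (R.mem_lat_iff x).mp hlat i
          have a1 : (0 : ℝ) < (n : ℝ) := hn ▸ h1 i
          have a2 : (0 : ℤ) < n := by exact_mod_cast a1
          rw [hn]
          exact_mod_cast a2
        have hsum : ∑ i, (R.c i : ℝ) * 1 ≤ ∑ i, (R.c i : ℝ) * ⟪R.simple i, x⟫ :=
          Finset.sum_le_sum fun i _ => mul_le_mul_of_nonneg_left (hge1 i) (by positivity)
        have hch : (R.coxh : ℝ) = 1 + ∑ i, (R.c i : ℝ) := by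
          rw [RootSystemData.coxh, Fintype.sum_option]
          push_cast
          norm_num [RootSystemData.cExt]
        have hhx : ⟪R.highest, x⟫ = ∑ i, (R.c i : ℝ) * ⟪R.simple i, x⟫ := R.inner_highest x
        have hq'' : q ≤ (R.coxh : ℤ) - 1 := by omega
        have hq' : (q : ℝ) ≤ (R.coxh : ℝ) - 1 := by exact_mod_cast hq''
        simp only [mul_one] at hsum
        linarith
      rw [hempty]
      simp
  · intro S q hq
    have hm0 : (0 : ℤ) ≤ ∑ i ∈ S, (R.cExt i : ℤ) := Finset.sum_nonneg fun i _ => by positivity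
    rw [R.key_s7 S q hq.le]
    simp only [RootSystemData.LP]
    rw [if_neg (by omega)]
end
end

section
/- Let Φ be an irreducible root system with fundamental alcove A^∘ and marks c₀ = 1, c₁, …, c_ℓ (coefficients of the highest root, with c₀ = 1) and Coxeter number h = Σ_{i=0}^ℓ c_i. Then the generating function of the Ehrhart quasi-polynomial of the open fundamental alcove with respect to the coweight lattice satisfies Σ_{q ≥ 1} L_{A^∘}(q) t^q = t^h / ∏_{i=0}^ℓ (1 − t^{c_i}). -/
open scoped RealInnerProductSpace Classical BigOperators

noncomputable section

namespace RootSystemData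

variable {ℓ : ℕ} (R : RootSystemData ℓ)

lemma cExt_pos (i : Option (Fin ℓ)) : 0 < R.cExt i := by
  cases i with
  | none => exact Nat.one_pos
  | some i => exact R.c_pos i

/-- coordinates w.r.t. the simple roots pairing -/
def Tmap : V ℓ →ₗ[ℝ] (Fin ℓ → ℝ) :=
  LinearMap.pi fun i =>
    { toFun := fun x => ⟪R.simple i, x⟫
      map_add' := fun x y => inner_add_right _ _ _
      map_smul' := fun t x => real_inner_smul_right _ _ _ }

lemma Tmap_apply (x : V ℓ) (i : Fin ℓ) : R.Tmap x i = ⟪R.simple i, x⟫ := rfl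

lemma Tmap_bijective : Function.Bijective R.Tmap := by
  have hcard : Fintype.card (Fin ℓ) = Module.finrank ℝ (V ℓ) := by simp
  have hspan := R.simple_indep.span_eq_top_of_card_eq_finrank' hcard
  have key : ∀ x : V ℓ, R.Tmap x = 0 → x = 0 := by
    intro x hx
    have h0 : ∀ i, ⟪R.simple i, x⟫ = 0 := fun i => congrFun hx i
    have hall : ∀ y ∈ Submodule.span ℝ (Set.range R.simple), ⟪y, x⟫ = 0 := by
      intro y hy
      induction hy using Submodule.span_induction with
      | mem y hy => obtain ⟨i, rfl⟩ := hy; exact h0 i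
      | zero => simp
      | add a b _ _ ha hb => rw [inner_add_left, ha, hb, add_zero]
      | smul t a _ ha => rw [real_inner_smul_left, ha, mul_zero]
    have := hall x (hspan ▸ Submodule.mem_top)
    exact inner_self_eq_zero.mp this
  have hinj : Function.Injective R.Tmap := by
    intro a b hab
    have := key (a - b) (by rw [map_sub, hab, sub_self])
    exact sub_eq_zero.mp this
  exact ⟨hinj, (LinearMap.injective_iff_surjective_of_finrank_eq_finrank (by simp)).mp hinj⟩

def Emap : V ℓ ≃ₗ[ℝ] (Fin ℓ → ℝ) := LinearEquiv.ofBijective R.Tmap R.Tmap_bijective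

lemma Emap_apply (x : V ℓ) (i : Fin ℓ) : R.Emap x i = ⟪R.simple i, x⟫ := rfl

section Geom

open PowerSeries

/-- geometric series in `X^c` -/
def geom (c : ℕ) : PowerSeries ℤ := PowerSeries.mk fun n => if c ∣ n then 1 else 0

lemma coeff_xpow_geom (c n : ℕ) :
    PowerSeries.coeff n (PowerSeries.X ^ c * geom c) =
      if c ∣ n ∧ c ≤ n then 1 else 0 := by
  rw [PowerSeries.coeff_X_pow_mul', geom]
  by_cases h : c ≤ n
  · rw [if_pos h, PowerSeries.coeff_mk]
    by_cases hd : c ∣ n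
    · rw [if_pos (Nat.dvd_sub hd dvd_rfl), if_pos ⟨hd, h⟩]
    · rw [if_neg, if_neg (by tauto)]
      intro hdd
      have h2 : n - c + c = n := Nat.sub_add_cancel h
      exact hd (h2 ▸ dvd_add hdd dvd_rfl)
  · rw [if_neg h, if_neg (fun hc => h hc.2)]

lemma geom_mul (c : ℕ) (hc : 0 < c) : (1 - PowerSeries.X ^ c) * geom c = 1 := by
  ext n
  rw [sub_mul, one_mul, map_sub, PowerSeries.coeff_one, coeff_xpow_geom, geom,
    PowerSeries.coeff_mk]
  by_cases hn : n = 0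
  · subst hn
    rw [if_pos (dvd_zero c), if_neg (by omega), if_pos rfl]
    ring
  · rw [if_neg hn]
    by_cases hd : c ∣ n
    · rw [if_pos hd, if_pos ⟨hd, Nat.le_of_dvd (Nat.pos_of_ne_zero hn) hd⟩]
      ring
    · rw [if_neg hd, if_neg (fun hc => hd hc.1)]
      ring

end Geom

/-- the product `∏ X^{c_i}/(1 - X^{c_i})` -/
def Fser : PowerSeries ℤ :=
  ∏ i : Option (Fin ℓ), (PowerSeries.X ^ R.cExt i * geom (R.cExt i))

lemma Fser_mul :
    R.Fser * ∏ i : Option (Fin ℓ), (1 - PowerSeries.X ^ R.cExt i) =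
      (PowerSeries.X : PowerSeries ℤ) ^ R.coxh := by
  rw [Fser, ← Finset.prod_mul_distrib, coxh, ← Finset.prod_pow_eq_pow_sum]
  refine Finset.prod_congr rfl fun i _ => ?_
  rw [mul_assoc, mul_comm (geom (R.cExt i)), geom_mul _ (R.cExt_pos i), mul_one]

/-- compositions of `q` as `∑ aᵢ cᵢ` with `aᵢ ≥ 1`, encoded as `l i = aᵢ cᵢ` -/
def compFinset (q : ℕ) : Finset (Option (Fin ℓ) →₀ ℕ) :=
  (Finset.univ.finsuppAntidiag q).filter fun l => ∀ i, R.cExt i ∣ l i ∧ R.cExt i ≤ l i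

lemma coeff_Fser (n : ℕ) :
    PowerSeries.coeff n R.Fser = ((R.compFinset n).card : ℤ) := by
  rw [Fser, PowerSeries.coeff_prod]
  have h1 : ∀ l : Option (Fin ℓ) →₀ ℕ,
      (∏ i, PowerSeries.coeff (l i) (PowerSeries.X ^ R.cExt i * geom (R.cExt i))) =
      if ∀ i, R.cExt i ∣ l i ∧ R.cExt i ≤ l i then 1 else 0 := by
    intro l
    rw [Finset.prod_congr rfl fun i _ => coeff_xpow_geom (R.cExt i) (l i),
      Fintype.prod_boole]
  rw [Finset.sum_congr rfl fun l _ => h1 l, Finset.sum_boole, compFinset]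

lemma mem_S_iff (q : ℕ) (hq : q ≠ 0) (x : V ℓ) :
    (x ∈ R.coweightLat ∧ ∃ y ∈ R.alc, x = (((q : ℤ)) : ℝ) • y) ↔
      ((∀ i, ∃ n : ℤ, ⟪R.simple i, x⟫ = (n : ℝ)) ∧ (∀ i, 0 < ⟪R.simple i, x⟫) ∧
        ⟪R.highest, x⟫ < (q : ℝ)) := by
  have hq0 : (0:ℝ) < (q:ℝ) := by exact_mod_cast Nat.pos_of_ne_zero hq
  constructor
  · rintro ⟨hlat, y, hy, rfl⟩
    refine ⟨hlat, fun i => ?_, ?_⟩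
    · rw [real_inner_smul_right]
      push_cast
      exact mul_pos hq0 (hy.1 i)
    · rw [real_inner_smul_right]
      push_cast
      calc (q:ℝ) * ⟪R.highest, y⟫ < (q:ℝ) * 1 := mul_lt_mul_of_pos_left hy.2 hq0
        _ = q := mul_one _
  · rintro ⟨hlat, hpos, hlt⟩
    refine ⟨hlat, (q:ℝ)⁻¹ • x, ⟨fun i => ?_, ?_⟩, ?_⟩
    · rw [real_inner_smul_right]
      exact mul_pos (inv_pos.mpr hq0) (hpos i)
    · rw [real_inner_smul_right, inv_mul_eq_div]
      exact (div_lt_one hq0).mpr hlt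
    · push_cast
      exact (smul_inv_smul₀ (ne_of_gt hq0) x).symm

lemma compFinset_facts {q : ℕ} {l : Option (Fin ℓ) →₀ ℕ} (hl : l ∈ R.compFinset q) :
    (l none + ∑ i, l (some i) = q) ∧ (1 ≤ l none) ∧
      ∀ i : Fin ℓ, R.c i ∣ l (some i) ∧ R.c i ≤ l (some i) := by
  rw [compFinset, Finset.mem_filter, Finset.mem_finsuppAntidiag] at hl
  obtain ⟨⟨hsum, -⟩, hcond⟩ := hl
  refine ⟨?_, (hcond none).2, fun i => hcond (some i)⟩
  rw [← hsum]
  exact (Fintype.sum_option (l : Option (Fin ℓ) → ℕ)).symm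

/-- the point of `V ℓ` associated to a composition -/
def lval (l : Option (Fin ℓ) →₀ ℕ) : V ℓ :=
  R.Emap.symm fun i => ((l (some i) / R.c i : ℕ) : ℝ)

lemma inner_lval (l : Option (Fin ℓ) →₀ ℕ) (i : Fin ℓ) :
    ⟪R.simple i, R.lval l⟫ = ((l (some i) / R.c i : ℕ) : ℝ) := by
  rw [← R.Emap_apply, lval, R.Emap.apply_symm_apply]

lemma lval_mem {q : ℕ} (hq : q ≠ 0) {l : Option (Fin ℓ) →₀ ℕ} (hl : l ∈ R.compFinset q) :
    R.lval l ∈ {x : V ℓ | x ∈ R.coweightLat ∧ ∃ y ∈ R.alc, x = (((q : ℤ)) : ℝ) • y} := by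
  rw [Set.mem_setOf_eq, R.mem_S_iff q hq]
  obtain ⟨hsum, h0, hc⟩ := R.compFinset_facts hl
  have hN : ∀ i, 1 ≤ l (some i) / R.c i := fun i =>
    (Nat.one_le_div_iff (R.c_pos i)).mpr (hc i).2
  refine ⟨fun i => ⟨((l (some i) / R.c i : ℕ) : ℤ), by rw [R.inner_lval]; norm_cast⟩,
    fun i => by rw [R.inner_lval]; exact_mod_cast Nat.lt_of_lt_of_le Nat.zero_lt_one (hN i), ?_⟩
  rw [R.inner_highest]
  have hsum2 : ∑ i, (R.c i : ℝ) * ⟪R.simple i, R.lval l⟫ = ((∑ i, l (some i) : ℕ) : ℝ) := by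
    rw [Nat.cast_sum]
    refine Finset.sum_congr rfl fun i _ => ?_
    rw [R.inner_lval, ← Nat.cast_mul, Nat.mul_div_cancel' (hc i).1]
  rw [hsum2]
  have : ∑ i, l (some i) < q := by omega
  exact_mod_cast this

lemma LP_eq_card (q : ℕ) (hq : q ≠ 0) :
    R.LP R.alc ((q : ℤ)) = (R.compFinset q).card := by
  rw [LP, if_neg (Int.not_lt.mpr (Int.natCast_nonneg q)), ← Nat.card_coe_set_eq,
    ← Nat.card_eq_finsetCard]
  refine (Nat.card_eq_of_bijective
    (fun l : {l // l ∈ R.compFinset q} => ⟨R.lval l.1, R.lval_mem hq l.2⟩) ⟨?_, ?_⟩).symm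
  · -- injective
    rintro ⟨l1, h1⟩ ⟨l2, h2⟩ h12
    obtain ⟨hs1, h01, hc1⟩ := R.compFinset_facts h1
    obtain ⟨hs2, h02, hc2⟩ := R.compFinset_facts h2
    have hv : R.lval l1 = R.lval l2 := Subtype.ext_iff.mp h12
    have hsome : ∀ i : Fin ℓ, l1 (some i) = l2 (some i) := by
      intro i
      have e1 := R.inner_lval l1 i
      have e2 := R.inner_lval l2 i
      rw [hv, e2] at e1
      have : l2 (some i) / R.c i = l1 (some i) / R.c i := by exact_mod_cast e1
      rw [← Nat.div_mul_cancel (hc1 i).1, ← Nat.div_mul_cancel (hc2 i).1, this]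
    have hsumeq : ∑ i, l1 (some i) = ∑ i, l2 (some i) :=
      Finset.sum_congr rfl fun i _ => hsome i
    refine Subtype.ext (Finsupp.ext fun o => ?_)
    cases o with
    | none => exact show l1 none = l2 none by omega
    | some i => exact hsome i
  · -- surjective
    rintro ⟨x, hx⟩
    rw [Set.mem_setOf_eq, R.mem_S_iff q hq] at hx
    obtain ⟨hlat, hpos, hlt⟩ := hx
    choose n hn using hlat
    have hn1 : ∀ i, 1 ≤ n i := by
      intro i
      have h := hpos i
      rw [hn i] at h
      have : (0:ℤ) < n i := by exact_mod_cast h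
      omega
    set N : Fin ℓ → ℕ := fun i => (n i).toNat with hNdef
    have hNcast : ∀ i, ((N i : ℕ) : ℝ) = ⟪R.simple i, x⟫ := by
      intro i
      have ht : ((N i : ℕ) : ℤ) = n i := Int.toNat_of_nonneg (by have := hn1 i; omega)
      rw [hn i]
      exact_mod_cast ht
    have hN1 : ∀ i, 1 ≤ N i := by
      intro i
      have := hn1 i
      simp only [hNdef]
      omega
    set m : ℕ := ∑ i, R.c i * N i with hm
    have hmq : m < q := by
      have hr : ((m : ℕ) : ℝ) < q := by
        rw [hm]
        push_cast
        calc ∑ i, (R.c i : ℝ) * (N i : ℝ) = ⟪R.highest, x⟫ := by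
              rw [R.inner_highest]
              exact Finset.sum_congr rfl fun i _ => by rw [hNcast i]
          _ < q := hlt
      exact_mod_cast hr
    set f : Option (Fin ℓ) → ℕ := fun o => Option.elim o (q - m) (fun i => R.c i * N i)
      with hfdef
    have happ : ∀ o, (Finsupp.equivFunOnFinite.symm f) o = f o := fun o => rfl
    have hmem : Finsupp.equivFunOnFinite.symm f ∈ R.compFinset q := by
      rw [compFinset, Finset.mem_filter, Finset.mem_finsuppAntidiag]
      refine ⟨⟨?_, Finset.subset_univ _⟩, ?_⟩
      · rw [Fintype.sum_option (Finsupp.equivFunOnFinite.symm f : Option (Fin ℓ) → ℕ)]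
        show (q - m) + ∑ i, R.c i * N i = q
        rw [← hm]
        omega
      · intro o
        cases o with
        | none =>
          refine ⟨one_dvd _, ?_⟩
          show 1 ≤ q - m
          omega
        | some i =>
          show R.c i ∣ R.c i * N i ∧ R.c i ≤ R.c i * N i
          exact ⟨dvd_mul_right _ _, Nat.le_mul_of_pos_right _ (hN1 i)⟩
    refine ⟨⟨Finsupp.equivFunOnFinite.symm f, hmem⟩, ?_⟩
    refine Subtype.ext ?_
    show R.lval _ = x
    rw [lval, LinearEquiv.symm_apply_eq]
    funext i
    rw [R.Emap_apply, ← hNcast i]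
    show (((R.c i * N i) / R.c i : ℕ) : ℝ) = ((N i : ℕ) : ℝ)
    rw [Nat.mul_div_cancel_left _ (R.c_pos i)]

end RootSystemData

/-- `∑_{q ≥ 1} L_{A^∘}(q) t^q = t^h / ∏_{i=0}^ℓ (1 - t^{c_i})`. -/
theorem ehrhart_series_open_alcove {ℓ : ℕ} (R : RootSystemData ℓ) :
    (PowerSeries.mk fun n : ℕ => if n = 0 then 0 else (R.LP R.alc (n : ℤ) : ℤ)) *
        ∏ i : Option (Fin ℓ), (1 - PowerSeries.X ^ R.cExt i) =
      (PowerSeries.X : PowerSeries ℤ) ^ R.coxh := by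
  have hmk : (PowerSeries.mk fun n : ℕ => if n = 0 then 0 else (R.LP R.alc (n : ℤ) : ℤ))
      = R.Fser := by
    ext n
    rw [PowerSeries.coeff_mk, R.coeff_Fser]
    by_cases hn : n = 0
    · subst hn
      rw [if_pos rfl]
      suffices h : R.compFinset 0 = ∅ by rw [h]; simp
      rw [Finset.eq_empty_iff_forall_notMem]
      intro l hl
      obtain ⟨hsum, h0, -⟩ := R.compFinset_facts hl
      have : l none ≤ l none + ∑ i, l (some i) := Nat.le_add_right _ _
      omega
    · rw [if_neg hn]
      exact_mod_cast R.LP_eq_card n hn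
  rw [hmk, R.Fser_mul]
end
end

section
/- For the root system Φ = G₂ with simple roots α₁ (short), α₂ (long) and positive roots {α₁, α₂, α₁+α₂, 2α₁+α₂, 3α₁+α₂, 3α₁+2α₂}, the number of pairs (z₁, z₂) ∈ (ℤ/qℤ)² such that z₁, z₂, z₁+z₂, 2z₁+z₂, 3z₁+z₂ are all nonzero in ℤ/qℤ equals: (q−1)(q−4) if q ≡ 1,5 mod 6; (q−2)(q−3) if q ≡ 2,3,4 mod 6; q² − 5q + 8 if q ≡ 0 mod 6. -/
open Finset

private lemma zmod_mul_eq_zero_iff {q : ℕ} [NeZero q] (m : ℕ) (a : ZMod q) :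
    (m : ZMod q) * a = 0 ↔ q ∣ m * a.val := by
  rw [← ZMod.natCast_eq_zero_iff, Nat.cast_mul, ZMod.natCast_zmod_val]

private lemma count_two {q : ℕ} [NeZero q] :
    (univ.filter fun a : ZMod q => a ≠ 0 ∧ 2 * a = 0).card = if q % 2 = 0 then 1 else 0 := by
  have hq : 0 < q := Nat.pos_of_ne_zero (NeZero.ne q)
  have key : ∀ a : ZMod q, 2 * a = 0 ↔ q ∣ 2 * a.val := by
    intro a
    rw [show ((2 : ZMod q)) = ((2 : ℕ) : ZMod q) by norm_cast]
    exact zmod_mul_eq_zero_iff 2 a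
  split_ifs with h
  · rw [Finset.card_eq_one]
    refine ⟨((q / 2 : ℕ) : ZMod q), ?_⟩
    ext a
    simp only [mem_filter, mem_univ, true_and, mem_singleton]
    constructor
    · rintro ⟨h0, h2⟩
      rw [key] at h2
      have hv : a.val < q := a.val_lt
      have hv0 : a.val ≠ 0 := fun hh => h0 ((ZMod.val_eq_zero a).mp hh)
      obtain ⟨k, hk⟩ := h2
      rcases k with _ | _ | k
      · simp only [Nat.mul_zero] at hk; omega
      · have hk' : 2 * a.val = q := by simpa using hk
        have : a.val = q / 2 := by omega
        rw [← this, ZMod.natCast_zmod_val]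
      · have hge : 2 * a.val ≥ q * 2 := hk ▸ Nat.mul_le_mul_left q (by omega)
        omega
    · rintro rfl
      have hlt : q / 2 < q := by omega
      have hval : ((q / 2 : ℕ) : ZMod q).val = q / 2 := ZMod.val_cast_of_lt hlt
      constructor
      · intro h0
        rw [h0, ZMod.val_zero] at hval; omega
      · rw [key, hval]
        exact ⟨1, by omega⟩
  · rw [Finset.card_eq_zero, Finset.filter_eq_empty_iff]
    rintro a - ⟨h0, h2⟩
    rw [key] at h2
    have hc : Nat.Coprime q 2 := Nat.coprime_two_right.mpr (Nat.odd_iff.mpr (by omega))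
    have hd : q ∣ a.val := hc.dvd_of_dvd_mul_left h2
    have hv : a.val < q := a.val_lt
    have hv0 : a.val ≠ 0 := fun hh => h0 ((ZMod.val_eq_zero a).mp hh)
    have := Nat.le_of_dvd (by omega) hd
    omega

private lemma count_three {q : ℕ} [NeZero q] :
    (univ.filter fun a : ZMod q => a ≠ 0 ∧ 2 * a ≠ 0 ∧ 3 * a = 0).card
      = if q % 3 = 0 then 2 else 0 := by
  have hq : 0 < q := Nat.pos_of_ne_zero (NeZero.ne q)
  have key : ∀ a : ZMod q, 3 * a = 0 ↔ q ∣ 3 * a.val := by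
    intro a
    rw [show ((3 : ZMod q)) = ((3 : ℕ) : ZMod q) by norm_cast]
    exact zmod_mul_eq_zero_iff 3 a
  have key2 : ∀ a : ZMod q, 2 * a = 0 ↔ q ∣ 2 * a.val := by
    intro a
    rw [show ((2 : ZMod q)) = ((2 : ℕ) : ZMod q) by norm_cast]
    exact zmod_mul_eq_zero_iff 2 a
  split_ifs with h
  · have h3 : 3 ∣ q := by omega
    have hq3 : 0 < q / 3 := Nat.div_pos (Nat.le_of_dvd hq h3) (by norm_num)
    have hlt1 : q / 3 < q := by omega
    have hlt2 : 2 * (q / 3) < q := by omega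
    have hval1 : ((q / 3 : ℕ) : ZMod q).val = q / 3 := ZMod.val_cast_of_lt hlt1
    have hval2 : ((2 * (q / 3) : ℕ) : ZMod q).val = 2 * (q / 3) := ZMod.val_cast_of_lt hlt2
    have hmem : ∀ a : ZMod q, a ≠ 0 ∧ 2 * a ≠ 0 ∧ 3 * a = 0 ↔
        a = ((q / 3 : ℕ) : ZMod q) ∨ a = ((2 * (q / 3) : ℕ) : ZMod q) := by
      intro a
      constructor
      · rintro ⟨h0, -, hz⟩
        rw [key] at hz
        have hv : a.val < q := a.val_lt
        have hv0 : a.val ≠ 0 := fun hh => h0 ((ZMod.val_eq_zero a).mp hh)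
        obtain ⟨k, hk⟩ := hz
        rcases k with _ | _ | _ | k
        · simp only [Nat.mul_zero] at hk; omega
        · left
          have hk' : 3 * a.val = q := by simpa using hk
          have : a.val = q / 3 := by omega
          rw [← this, ZMod.natCast_zmod_val]
        · right
          have hk' : 3 * a.val = q * 2 := by simpa using hk
          have : a.val = 2 * (q / 3) := by omega
          rw [← this, ZMod.natCast_zmod_val]
        · have hge : 3 * a.val ≥ q * 3 := hk ▸ Nat.mul_le_mul_left q (by omega)
          omega
      · rintro (rfl | rfl)
        · refine ⟨?_, ?_, ?_⟩
          · intro h0; rw [h0, ZMod.val_zero] at hval1; omega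
          · intro hd
            rw [key2, hval1] at hd
            have := Nat.le_of_dvd (by omega) hd
            omega
          · rw [key, hval1]
            exact ⟨1, by omega⟩
        · refine ⟨?_, ?_, ?_⟩
          · intro h0; rw [h0, ZMod.val_zero] at hval2; omega
          · intro hd
            rw [key2, hval2] at hd
            rcases hd with ⟨k, hk⟩
            rcases k with _ | _ | k
            · simp only [Nat.mul_zero] at hk; omega
            · have hk' : 2 * (2 * (q / 3)) = q := by simpa using hk
              omega
            · have hge : 2 * (2 * (q / 3)) ≥ q * 2 := hk ▸ Nat.mul_le_mul_left q (by omega)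
              omega
          · rw [key, hval2]
            exact ⟨2, by omega⟩
    have hset : (univ.filter fun a : ZMod q => a ≠ 0 ∧ 2 * a ≠ 0 ∧ 3 * a = 0)
        = {((q / 3 : ℕ) : ZMod q), ((2 * (q / 3) : ℕ) : ZMod q)} := by
      ext a
      simp only [mem_filter, mem_univ, true_and, mem_insert, mem_singleton]
      exact hmem a
    rw [hset, Finset.card_insert_of_notMem, Finset.card_singleton]
    simp only [mem_singleton]
    intro he
    have := congrArg ZMod.val he
    rw [hval1, hval2] at this
    omega
  · rw [Finset.card_eq_zero, Finset.filter_eq_empty_iff]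
    rintro a - ⟨h0, -, hz⟩
    rw [key] at hz
    have hc : Nat.Coprime q 3 := by
      rw [Nat.coprime_comm]
      exact (Nat.Prime.coprime_iff_not_dvd (by norm_num)).mpr (by omega)
    have hd : q ∣ a.val := hc.dvd_of_dvd_mul_left hz
    have hv : a.val < q := a.val_lt
    have hv0 : a.val ≠ 0 := fun hh => h0 ((ZMod.val_eq_zero a).mp hh)
    have := Nat.le_of_dvd (by omega) hd
    omega

/-- for `Ψ = Φ⁺(G₂) \ {3α₁+2α₂}`, the number of pairs `(z₁, z₂) ∈ (ℤ/qℤ)²` with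
`z₁, z₂, z₁+z₂, 2z₁+z₂, 3z₁+z₂` all nonzero is `(q-1)(q-4)` if `q ≡ 1,5 mod 6`,
`(q-2)(q-3)` if `q ≡ 2,3,4 mod 6`, and `q² - 5q + 8` if `q ≡ 0 mod 6`. -/
theorem char_quasipoly_G2_minus_highest (q : ℕ) (hq : 0 < q) :
    (Nat.card {z : ZMod q × ZMod q //
        z.1 ≠ 0 ∧ z.2 ≠ 0 ∧ z.1 + z.2 ≠ 0 ∧ 2 * z.1 + z.2 ≠ 0 ∧ 3 * z.1 + z.2 ≠ 0} : ℤ) =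
      if q % 6 = 1 ∨ q % 6 = 5 then ((q : ℤ) - 1) * ((q : ℤ) - 4)
      else if q % 6 = 0 then (q : ℤ) ^ 2 - 5 * q + 8
      else ((q : ℤ) - 2) * ((q : ℤ) - 3) := by
  rcases lt_or_ge q 5 with h5 | h5
  · interval_cases q <;> rw [Nat.card_eq_fintype_card] <;> decide
  haveI : NeZero q := ⟨by omega⟩
  rw [Nat.card_eq_fintype_card, Fintype.card_subtype]
  have hinner : ∀ a : ZMod q, a ≠ 0 →
      (univ.filter fun b : ZMod q => b ≠ 0 ∧ a + b ≠ 0 ∧ 2 * a + b ≠ 0 ∧ 3 * a + b ≠ 0).card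
        = q - ({0, -a, -(2 * a), -(3 * a)} : Finset (ZMod q)).card := by
    intro a _
    have hfe : (univ.filter fun b : ZMod q =>
        b ≠ 0 ∧ a + b ≠ 0 ∧ 2 * a + b ≠ 0 ∧ 3 * a + b ≠ 0)
        = ({0, -a, -(2 * a), -(3 * a)} : Finset (ZMod q))ᶜ := by
      ext b
      simp only [mem_filter, mem_univ, true_and, mem_compl, mem_insert, mem_singleton, not_or]
      constructor
      · rintro ⟨h0, h1, h2, h3⟩
        refine ⟨h0, ?_, ?_, ?_⟩ <;> intro he
        · exact h1 (by rw [he]; ring)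
        · exact h2 (by rw [he]; ring)
        · exact h3 (by rw [he]; ring)
      · rintro ⟨h0, h1, h2, h3⟩
        refine ⟨h0, ?_, ?_, ?_⟩ <;> intro he
        · exact h1 (by linear_combination he)
        · exact h2 (by linear_combination he)
        · exact h3 (by linear_combination he)
    rw [hfe, Finset.card_compl, ZMod.card]
  have hcard2 : ∀ a : ZMod q, a ≠ 0 → 2 * a = 0 →
      ({0, -a, -(2 * a), -(3 * a)} : Finset (ZMod q)).card = 2 := by
    intro a ha h2
    have h3 : (3 : ZMod q) * a = a := by linear_combination h2
    have hset : ({0, -a, -(2 * a), -(3 * a)} : Finset (ZMod q)) = {0, -a} := by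
      ext x
      simp only [mem_insert, mem_singleton, h2, h3, neg_zero]
      tauto
    rw [hset, Finset.card_insert_of_notMem, Finset.card_singleton]
    simp only [mem_singleton]
    intro he
    exact ha (by linear_combination he)
  have hcard3 : ∀ a : ZMod q, a ≠ 0 → 2 * a ≠ 0 → 3 * a = 0 →
      ({0, -a, -(2 * a), -(3 * a)} : Finset (ZMod q)).card = 3 := by
    intro a ha h2 h3
    have hset : ({0, -a, -(2 * a), -(3 * a)} : Finset (ZMod q)) = {0, -a, -(2 * a)} := by
      ext x
      simp only [mem_insert, mem_singleton, h3, neg_zero]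
      tauto
    rw [hset, Finset.card_insert_of_notMem, Finset.card_insert_of_notMem,
      Finset.card_singleton]
    · simp only [mem_singleton]
      intro he
      exact ha (by linear_combination he)
    · simp only [mem_insert, mem_singleton, not_or]
      exact ⟨fun he => ha (by linear_combination he), fun he => h2 (by linear_combination he)⟩
  have hcard4 : ∀ a : ZMod q, a ≠ 0 → 2 * a ≠ 0 → 3 * a ≠ 0 →
      ({0, -a, -(2 * a), -(3 * a)} : Finset (ZMod q)).card = 4 := by
    intro a ha h2 h3
    rw [Finset.card_insert_of_notMem, Finset.card_insert_of_notMem,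
      Finset.card_insert_of_notMem, Finset.card_singleton]
    · simp only [mem_singleton]
      intro he
      exact ha (by linear_combination he)
    · simp only [mem_insert, mem_singleton, not_or]
      exact ⟨fun he => ha (by linear_combination he), fun he => h2 (by linear_combination he)⟩
    · simp only [mem_insert, mem_singleton, not_or]
      exact ⟨fun he => ha (by linear_combination he), fun he => h2 (by linear_combination he),
        fun he => h3 (by linear_combination he)⟩
  have hsum : (univ.filter fun z : ZMod q × ZMod q =>
      z.1 ≠ 0 ∧ z.2 ≠ 0 ∧ z.1 + z.2 ≠ 0 ∧ 2 * z.1 + z.2 ≠ 0 ∧ 3 * z.1 + z.2 ≠ 0).card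
      = ∑ a : ZMod q, ((if a ≠ 0 then q - 4 else 0)
        + ((if a ≠ 0 ∧ 2 * a = 0 then 2 else 0)
        + (if a ≠ 0 ∧ 2 * a ≠ 0 ∧ 3 * a = 0 then 1 else 0))) := by
    rw [Finset.card_filter, ← Finset.univ_product_univ, Finset.sum_product]
    refine Finset.sum_congr rfl fun a _ => ?_
    by_cases ha : a = 0
    · simp [ha]
    · have hrw : (∑ b : ZMod q,
          if a ≠ 0 ∧ b ≠ 0 ∧ a + b ≠ 0 ∧ 2 * a + b ≠ 0 ∧ 3 * a + b ≠ 0 then 1 else 0)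
          = (univ.filter fun b : ZMod q =>
              b ≠ 0 ∧ a + b ≠ 0 ∧ 2 * a + b ≠ 0 ∧ 3 * a + b ≠ 0).card := by
        rw [Finset.card_filter]
        exact Finset.sum_congr rfl fun b _ => by simp [ha]
      rw [hrw, hinner a ha]
      by_cases h2 : 2 * a = 0
      · rw [hcard2 a ha h2, if_pos ha, if_pos ⟨ha, h2⟩, if_neg (by tauto)]
        omega
      · by_cases h3 : 3 * a = 0
        · rw [hcard3 a ha h2 h3, if_pos ha, if_neg (by tauto), if_pos ⟨ha, h2, h3⟩]
          omega
        · rw [hcard4 a ha h2 h3, if_pos ha, if_neg (by tauto), if_neg (by tauto)]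
          omega
  rw [hsum, Finset.sum_add_distrib, Finset.sum_add_distrib]
  have s1 : (∑ a : ZMod q, if a ≠ 0 then q - 4 else 0) = (q - 1) * (q - 4) := by
    rw [← Finset.sum_filter, Finset.sum_const, smul_eq_mul, Finset.filter_ne',
      Finset.card_erase_of_mem (mem_univ 0), card_univ, ZMod.card]
  have s2 : (∑ a : ZMod q, if a ≠ 0 ∧ 2 * a = 0 then 2 else 0)
      = (if q % 2 = 0 then 1 else 0) * 2 := by
    rw [← Finset.sum_filter, Finset.sum_const, smul_eq_mul, count_two]
  have s3 : (∑ a : ZMod q, if a ≠ 0 ∧ 2 * a ≠ 0 ∧ 3 * a = 0 then 1 else 0)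
      = (if q % 3 = 0 then 2 else 0) * 1 := by
    rw [← Finset.sum_filter, Finset.sum_const, smul_eq_mul, count_three]
  rw [s1, s2, s3]
  have h6 : q % 6 = 0 ∨ q % 6 = 1 ∨ q % 6 = 2 ∨ q % 6 = 3 ∨ q % 6 = 4 ∨ q % 6 = 5 := by
    omega
  have c1 : 1 ≤ q := by omega
  have c4 : 4 ≤ q := by omega
  rcases h6 with h | h | h | h | h | h
  · rw [if_neg (show ¬(q % 6 = 1 ∨ q % 6 = 5) by omega), if_pos (show q % 6 = 0 by omega),
      if_pos (show q % 2 = 0 by omega), if_pos (show q % 3 = 0 by omega)]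
    push_cast [Nat.cast_sub c1, Nat.cast_sub c4]
    ring
  · rw [if_pos (show q % 6 = 1 ∨ q % 6 = 5 by omega),
      if_neg (show ¬q % 2 = 0 by omega), if_neg (show ¬q % 3 = 0 by omega)]
    push_cast [Nat.cast_sub c1, Nat.cast_sub c4]
    ring
  · rw [if_neg (show ¬(q % 6 = 1 ∨ q % 6 = 5) by omega), if_neg (show ¬q % 6 = 0 by omega),
      if_pos (show q % 2 = 0 by omega), if_neg (show ¬q % 3 = 0 by omega)]
    push_cast [Nat.cast_sub c1, Nat.cast_sub c4]
    ring
  · rw [if_neg (show ¬(q % 6 = 1 ∨ q % 6 = 5) by omega), if_neg (show ¬q % 6 = 0 by omega),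
      if_neg (show ¬q % 2 = 0 by omega), if_pos (show q % 3 = 0 by omega)]
    push_cast [Nat.cast_sub c1, Nat.cast_sub c4]
    ring
  · rw [if_neg (show ¬(q % 6 = 1 ∨ q % 6 = 5) by omega), if_neg (show ¬q % 6 = 0 by omega),
      if_pos (show q % 2 = 0 by omega), if_neg (show ¬q % 3 = 0 by omega)]
    push_cast [Nat.cast_sub c1, Nat.cast_sub c4]
    ring
  · rw [if_pos (show q % 6 = 1 ∨ q % 6 = 5 by omega),
      if_neg (show ¬q % 2 = 0 by omega), if_neg (show ¬q % 3 = 0 by omega)]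
    push_cast [Nat.cast_sub c1, Nat.cast_sub c4]
    ring
end

section
/- Let Φ = G₂ and Ψ = Φ⁺ \ {3α₁+2α₂} (removing the highest root). Then for all positive integers q, the characteristic quasi-polynomial χ^quasi_Ψ(q) (counting (z₁,z₂) ∈ (ℤ/q)² with z₁, z₂, z₁+z₂, 2z₁+z₂, 3z₁+z₂ all nonzero) satisfies χ^quasi_Ψ(q) = 8·L_{Ā}(q−6) + 2·L_{Ā}(q−5) + 2·L_{Ā}(q−4), where L_{Ā}(q) = #{(m,n) ∈ ℤ²_{≥0} : 3m+2n ≤ q} for q ≥ 0 and L_{Ā}(q) = 0 for q < 0 interpreted via the quasi-polynomial extension (in particular the identity holds for all q ≥ 6). -/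
/-- The lattice point counting function `L_{Ā}(q) = #{(m,n) ∈ ℤ²_{≥0} : 3m + 2n ≤ q}` of the
closed fundamental alcove of `G₂` with respect to the coweight lattice. -/

def LalcG2 (q : ℕ) : ℕ :=
  ((Finset.range (q + 1) ×ˢ Finset.range (q + 1)).filter
    (fun p => 3 * p.1 + 2 * p.2 ≤ q)).card

lemma Lgen (n N : ℕ) (h : n < N) :
    LalcG2 n = ((Finset.range N ×ˢ Finset.range N).filter
      (fun p => 3 * p.1 + 2 * p.2 ≤ n)).card := by
  unfold LalcG2
  congr 1
  ext ⟨a, b⟩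
  simp only [Finset.mem_filter, Finset.mem_product, Finset.mem_range]
  omega

lemma rowcard (n b : ℕ) (hb : b ≤ 2) :
    ((Finset.range (n+7) ×ˢ Finset.range (n+7)).filter
      (fun p => 3 * p.1 + 2 * p.2 ≤ n + 6 ∧ p.2 = b)).card = (n + 6 - 2*b)/3 + 1 := by
  rw [show (n + 6 - 2*b)/3 + 1 = (Finset.range ((n + 6 - 2*b)/3 + 1)).card by
    rw [Finset.card_range]]
  apply Finset.card_nbij' (fun p => p.1) (fun m => (m, b))
  · rintro ⟨x, y⟩ h
    simp only [Finset.mem_coe, Finset.mem_filter, Finset.mem_product, Finset.mem_range] at h ⊢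
    omega
  · intro m hm
    simp at hm ⊢
    omega
  · rintro ⟨x, y⟩ h
    simp only [Finset.mem_coe, Finset.mem_filter, Finset.mem_product, Finset.mem_range] at h
    simp [Prod.ext_iff]
    omega
  · intro m _
    rfl

lemma Lrec (n : ℕ) : LalcG2 (n + 6) = LalcG2 n + (n + 6) := by
  have hsplit : ∀ (P C : ℕ × ℕ → Prop) [DecidablePred P] [DecidablePred C],
      (((Finset.range (n+7) ×ˢ Finset.range (n+7))).filter P).card =
        ((Finset.range (n+7) ×ˢ Finset.range (n+7)).filter (fun p => P p ∧ C p)).card +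
        ((Finset.range (n+7) ×ˢ Finset.range (n+7)).filter (fun p => P p ∧ ¬ C p)).card := by
    intro P C _ _
    rw [← Finset.filter_filter, ← Finset.filter_filter,
      Finset.card_filter_add_card_filter_not]
  rw [Lgen (n+6) (n+7) (by omega), Lgen n (n+7) (by omega)]
  rw [hsplit _ (fun p => 3 ≤ p.2)]
  rw [hsplit (fun p => 3 * p.1 + 2 * p.2 ≤ n + 6 ∧ ¬ 3 ≤ p.2) (fun p => p.2 = 0)]
  rw [hsplit (fun p => (3 * p.1 + 2 * p.2 ≤ n + 6 ∧ ¬ 3 ≤ p.2) ∧ ¬ p.2 = 0)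
    (fun p => p.2 = 1)]
  have e1 : ((Finset.range (n+7) ×ˢ Finset.range (n+7)).filter
      (fun p => 3 * p.1 + 2 * p.2 ≤ n + 6 ∧ 3 ≤ p.2)).card =
      ((Finset.range (n+7) ×ˢ Finset.range (n+7)).filter
      (fun p => 3 * p.1 + 2 * p.2 ≤ n)).card := by
    apply Finset.card_nbij' (fun p => (p.1, p.2 - 3)) (fun p => (p.1, p.2 + 3))
    · rintro ⟨a, b⟩ h
      simp only [Finset.mem_coe, Finset.mem_filter, Finset.mem_product, Finset.mem_range] at h ⊢
      omega
    · rintro ⟨a, b⟩ h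
      simp only [Finset.mem_coe, Finset.mem_filter, Finset.mem_product, Finset.mem_range] at h ⊢
      omega
    · rintro ⟨a, b⟩ h
      simp only [Finset.mem_coe, Finset.mem_filter, Finset.mem_product, Finset.mem_range] at h
      simp [Prod.ext_iff]
      omega
    · rintro ⟨a, b⟩ h
      simp only [Finset.mem_coe, Finset.mem_filter, Finset.mem_product, Finset.mem_range] at h
      simp [Prod.ext_iff]
  have e2 : ((Finset.range (n+7) ×ˢ Finset.range (n+7)).filter
      (fun p => (3 * p.1 + 2 * p.2 ≤ n + 6 ∧ ¬ 3 ≤ p.2) ∧ p.2 = 0)).card = (n+6)/3 + 1 := by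
    rw [show ((n:ℕ)+6)/3 + 1 = (n + 6 - 2*0)/3 + 1 by omega, ← rowcard n 0 (by omega)]
    congr 1
    ext ⟨a, b⟩
    simp only [Finset.mem_filter, Finset.mem_product, Finset.mem_range]
    omega
  have e3 : ((Finset.range (n+7) ×ˢ Finset.range (n+7)).filter
      (fun p => ((3 * p.1 + 2 * p.2 ≤ n + 6 ∧ ¬ 3 ≤ p.2) ∧ ¬ p.2 = 0) ∧ p.2 = 1)).card
      = (n+4)/3 + 1 := by
    rw [show ((n:ℕ)+4)/3 + 1 = (n + 6 - 2*1)/3 + 1 by omega, ← rowcard n 1 (by omega)]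
    congr 1
    ext ⟨a, b⟩
    simp only [Finset.mem_filter, Finset.mem_product, Finset.mem_range]
    omega
  have e4 : ((Finset.range (n+7) ×ˢ Finset.range (n+7)).filter
      (fun p => ((3 * p.1 + 2 * p.2 ≤ n + 6 ∧ ¬ 3 ≤ p.2) ∧ ¬ p.2 = 0) ∧ ¬ p.2 = 1)).card
      = (n+2)/3 + 1 := by
    rw [show ((n:ℕ)+2)/3 + 1 = (n + 6 - 2*2)/3 + 1 by omega, ← rowcard n 2 (by omega)]
    congr 1
    ext ⟨a, b⟩
    simp only [Finset.mem_filter, Finset.mem_product, Finset.mem_range]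
    omega
  rw [e1, e2, e3, e4]
  omega



lemma dvd_window (q x : ℕ) (h0 : 0 < q) (hx : x < 4 * q) :
    q ∣ x ↔ (x = 0 ∨ x = q ∨ x = 2 * q ∨ x = 3 * q) := by
  constructor
  · rintro ⟨k, rfl⟩
    rw [show 4 * q = q * 4 from Nat.mul_comm _ _] at hx
    have hk := Nat.lt_of_mul_lt_mul_left hx
    interval_cases k <;> omega
  · rintro (rfl | rfl | rfl | rfl)
    · exact ⟨0, by ring⟩
    · exact ⟨1, by ring⟩
    · exact ⟨2, by ring⟩
    · exact ⟨3, by ring⟩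

section zmod
variable {q : ℕ} [NeZero q]

lemma eqcast (a : ZMod q) (c : ℕ) (hc : c < q) : a = (c : ZMod q) ↔ a.val = c := by
  constructor
  · intro h; rw [h, ZMod.val_cast_of_lt hc]
  · intro h; rw [← ZMod.natCast_zmod_val a, h]

lemma mulzero (k : ℕ) (a : ZMod q) : (k : ZMod q) * a = 0 ↔ q ∣ k * a.val := by
  rw [show (k : ZMod q) * a = ((k * a.val : ℕ) : ZMod q) by
    push_cast [ZMod.natCast_zmod_val]; ring, ZMod.natCast_eq_zero_iff]

end zmod

lemma count2 (q : ℕ) (hq : 6 ≤ q) :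
    haveI : NeZero q := ⟨by omega⟩
    ((Finset.univ.erase (0 : ZMod q)).filter (fun a => 2 * a = 0)).card
      = if 2 ∣ q then 1 else 0 := by
  haveI : NeZero q := ⟨by omega⟩
  have key : ∀ a : ZMod q, 2 * a = 0 ↔ (a.val = 0 ∨ 2 * a.val = q) := by
    intro a
    have hv := ZMod.val_lt a
    rw [show (2 : ZMod q) = ((2 : ℕ) : ZMod q) by push_cast; ring, mulzero,
      dvd_window q _ (by omega) (by omega)]
    omega
  split_ifs with h
  · refine Eq.trans ?_ (show ({((q/2 : ℕ) : ZMod q)} : Finset (ZMod q)).card = 1 from rfl)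
    congr 1
    ext a
    have hv := ZMod.val_lt a
    simp only [Finset.mem_filter, Finset.mem_erase, Finset.mem_univ, true_and,
      Finset.mem_singleton, key, eqcast a (q/2) (by omega), ← ZMod.val_eq_zero,
      ne_eq, and_true]
    omega
  · rw [Finset.card_eq_zero, Finset.filter_eq_empty_iff]
    intro a ha
    have hv := ZMod.val_lt a
    simp only [Finset.mem_erase, Finset.mem_univ, and_true, ne_eq,
      ← ZMod.val_eq_zero] at ha
    simp only [key]
    omega

lemma count3 (q : ℕ) (hq : 6 ≤ q) :
    haveI : NeZero q := ⟨by omega⟩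
    ((Finset.univ.erase (0 : ZMod q)).filter (fun a => 3 * a = 0)).card
      = if 3 ∣ q then 2 else 0 := by
  haveI : NeZero q := ⟨by omega⟩
  have key : ∀ a : ZMod q, 3 * a = 0 ↔ (a.val = 0 ∨ 3 * a.val = q ∨ 3 * a.val = 2 * q) := by
    intro a
    have hv := ZMod.val_lt a
    rw [show (3 : ZMod q) = ((3 : ℕ) : ZMod q) by push_cast; ring, mulzero,
      dvd_window q _ (by omega) (by omega)]
    omega
  split_ifs with h
  · refine Eq.trans ?_ (show ({((q/3 : ℕ) : ZMod q), ((2*q/3 : ℕ) : ZMod q)} : Finset (ZMod q)).card = 2 by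
      rw [Finset.card_pair]
      intro hc
      rw [eqcast _ (2*q/3) (by omega), ZMod.val_cast_of_lt (by omega : q/3 < q)] at hc
      omega)
    congr 1
    ext a
    have hv := ZMod.val_lt a
    simp only [Finset.mem_filter, Finset.mem_erase, Finset.mem_univ, true_and,
      Finset.mem_insert, Finset.mem_singleton, key, eqcast a (q/3) (by omega),
      eqcast a (2*q/3) (by omega), ← ZMod.val_eq_zero, ne_eq, and_true]
    omega
  · rw [Finset.card_eq_zero, Finset.filter_eq_empty_iff]
    intro a ha
    have hv := ZMod.val_lt a
    simp only [Finset.mem_erase, Finset.mem_univ, and_true, ne_eq,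
      ← ZMod.val_eq_zero] at ha
    simp only [key]
    omega

lemma inner_card (q : ℕ) (hq : 6 ≤ q) (a : ZMod q) (ha : a ≠ 0) :
    haveI : NeZero q := ⟨by omega⟩
    (Finset.univ.filter
        (fun b : ZMod q => b ≠ 0 ∧ a + b ≠ 0 ∧ 2*a + b ≠ 0 ∧ 3*a + b ≠ 0)).card
      = q - 4 + (if 2*a = 0 then 2 else 0) + (if 3*a = 0 then 1 else 0) := by
  haveI : NeZero q := ⟨by omega⟩
  have k : ∀ c b : ZMod q, c + b = 0 ↔ b = -c := by
    intro c b
    constructor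
    · intro h; linear_combination h
    · intro h; rw [h]; ring
  have hD : Finset.univ.filter
        (fun b : ZMod q => b ≠ 0 ∧ a + b ≠ 0 ∧ 2*a + b ≠ 0 ∧ 3*a + b ≠ 0)
      = Finset.univ \ {0, -a, -(2*a), -(3*a)} := by
    ext b
    simp only [Finset.mem_filter, Finset.mem_univ, true_and, Finset.mem_sdiff,
      Finset.mem_insert, Finset.mem_singleton, k, not_or, ne_eq]
  rw [hD, Finset.card_sdiff_of_subset (Finset.subset_univ _), Finset.card_univ, ZMod.card]
  by_cases h2 : 2*a = 0
  · have h3 : (3 : ZMod q)*a = a := by linear_combination h2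
    have hD2 : ({0, -a, -(2*a), -(3*a)} : Finset (ZMod q)) = {0, -a} := by
      rw [h2, h3, neg_zero]
      ext x; simp
    rw [hD2, Finset.card_pair (by intro hc; exact ha (by linear_combination hc)),
      if_pos h2, if_neg (by rw [h3]; exact ha)]
    omega
  · by_cases h3 : (3 : ZMod q)*a = 0
    · have hD2 : ({0, -a, -(2*a), -(3*a)} : Finset (ZMod q)) = {0, -a, -(2*a)} := by
        rw [h3, neg_zero]
        ext x; simp; tauto
      rw [hD2]
      have c3 : ({0, -a, -(2*a)} : Finset (ZMod q)).card = 3 := by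
        rw [Finset.card_insert_of_notMem, Finset.card_pair]
        · intro hc; exact ha (by linear_combination hc)
        · simp only [Finset.mem_insert, Finset.mem_singleton]
          push_neg
          exact ⟨fun hc => ha (by linear_combination hc),
                 fun hc => h2 (by linear_combination hc)⟩
      rw [c3, if_neg h2, if_pos h3]
      omega
    · have c4 : ({0, -a, -(2*a), -(3*a)} : Finset (ZMod q)).card = 4 := by
        rw [Finset.card_insert_of_notMem, Finset.card_insert_of_notMem,
          Finset.card_pair]
        · intro hc; exact ha (by linear_combination hc)
        · simp only [Finset.mem_insert, Finset.mem_singleton]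
          push_neg
          exact ⟨fun hc => ha (by linear_combination hc),
                 fun hc => h2 (by linear_combination hc)⟩
        · simp only [Finset.mem_insert, Finset.mem_singleton]
          push_neg
          refine ⟨fun hc => ha (by linear_combination hc),
                 fun hc => h2 (by linear_combination hc),
                 fun hc => h3 (by linear_combination hc)⟩
      rw [c4, if_neg h2, if_neg h3]
      omega

lemma RHSval (q : ℕ) (hq : 6 ≤ q) :
    8 * LalcG2 (q - 6) + 2 * LalcG2 (q - 5) + 2 * LalcG2 (q - 4)
      = (q - 1) * (q - 4) + (if 2 ∣ q then 2 else 0) + (if 3 ∣ q then 2 else 0) := by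
  induction q using Nat.strong_induction_on with
  | _ q ih =>
    rcases Nat.lt_or_ge q 12 with h | h
    · interval_cases q <;> decide
    · obtain ⟨m, rfl⟩ : ∃ m, q = m + 12 := ⟨q - 12, by omega⟩
      have ihm := ih (m + 6) (by omega) (by omega)
      rw [show m+6-6 = m from by omega, show m+6-5 = m+1 from by omega,
        show m+6-4 = m+2 from by omega, show m+6-1 = m+5 from by omega] at ihm
      rw [show m+12-6 = m+6 from by omega, show m+12-5 = m+7 from by omega,
        show m+12-4 = m+8 from by omega, show m+12-1 = m+11 from by omega]
      have r1 : LalcG2 (m+6) = LalcG2 m + (m+6) := Lrec m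
      have r2 : LalcG2 (m+7) = LalcG2 (m+1) + (m+7) := by
        have h' := Lrec (m+1); rw [show m+1+6 = m+7 from by omega,
          show m+1+6 = m+7 from by omega] at h'; omega
      have r3 : LalcG2 (m+8) = LalcG2 (m+2) + (m+8) := by
        have h' := Lrec (m+2); rw [show m+2+6 = m+8 from by omega] at h'; omega
      rw [r1, r2, r3]
      simp only [show ((2:ℕ) ∣ m+12) ↔ ((2:ℕ) ∣ m+6) from by omega,
        show ((3:ℕ) ∣ m+12) ↔ ((3:ℕ) ∣ m+6) from by omega]
      have e : (m+11) * (m+8) = (m+5) * (m+2) + 12 * m + 78 := by ring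
      rw [e]
      generalize (m+5) * (m+2) = P at ihm ⊢
      split_ifs at ihm ⊢ <;> omega

/-- for `Ψ = Φ⁺(G₂) \ {3α₁+2α₂}` and all `q ≥ 6` (so that all arguments of
`L_{Ā}` are nonnegative), `χ^quasi_Ψ(q) = 8·L_{Ā}(q-6) + 2·L_{Ā}(q-5) + 2·L_{Ā}(q-4)`,
reflecting the `A`-Eulerian polynomial `E_Ψ(t) = 8t⁶ + 2t⁵ + 2t⁴`. -/
theorem char_quasipoly_G2_eulerian_shift (q : ℕ) (hq : 6 ≤ q) :
    Nat.card {z : ZMod q × ZMod q //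
        z.1 ≠ 0 ∧ z.2 ≠ 0 ∧ z.1 + z.2 ≠ 0 ∧ 2 * z.1 + z.2 ≠ 0 ∧ 3 * z.1 + z.2 ≠ 0} =
      8 * LalcG2 (q - 6) + 2 * LalcG2 (q - 5) + 2 * LalcG2 (q - 4) := by
  haveI : NeZero q := ⟨by omega⟩
  rw [RHSval q hq]
  rw [Nat.card_eq_fintype_card]
  rw [Fintype.card_congr (Equiv.subtypeProdEquivSigmaSubtype
    (fun (a b : ZMod q) => a ≠ 0 ∧ b ≠ 0 ∧ a + b ≠ 0 ∧ 2*a + b ≠ 0 ∧ 3*a + b ≠ 0))]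
  rw [Fintype.card_sigma]
  simp only [Fintype.card_subtype]
  rw [← Finset.add_sum_erase _ _ (Finset.mem_univ (0 : ZMod q))]
  have h0 : (Finset.univ.filter (fun b : ZMod q =>
      (0 : ZMod q) ≠ 0 ∧ b ≠ 0 ∧ 0 + b ≠ 0 ∧ 2*0 + b ≠ 0 ∧ 3*0 + b ≠ 0)).card = 0 := by
    simp
  rw [h0, zero_add]
  have hstep : ∀ a ∈ Finset.univ.erase (0 : ZMod q),
      (Finset.univ.filter (fun b : ZMod q =>
        a ≠ 0 ∧ b ≠ 0 ∧ a + b ≠ 0 ∧ 2*a + b ≠ 0 ∧ 3*a + b ≠ 0)).card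
      = q - 4 + ((if 2*a = 0 then 2 else 0) + (if 3*a = 0 then 1 else 0)) := by
    intro a ha
    have ha' : a ≠ 0 := (Finset.mem_erase.mp ha).1
    have hfc : Finset.univ.filter (fun b : ZMod q =>
        a ≠ 0 ∧ b ≠ 0 ∧ a + b ≠ 0 ∧ 2*a + b ≠ 0 ∧ 3*a + b ≠ 0)
        = Finset.univ.filter (fun b : ZMod q =>
        b ≠ 0 ∧ a + b ≠ 0 ∧ 2*a + b ≠ 0 ∧ 3*a + b ≠ 0) := by
      ext b; simp [ha']
    rw [hfc, inner_card q hq a ha']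
    omega
  rw [Finset.sum_congr rfl hstep]
  rw [Finset.sum_add_distrib, Finset.sum_add_distrib]
  rw [Finset.sum_const, ← Finset.sum_filter, ← Finset.sum_filter]
  rw [Finset.sum_const, Finset.sum_const]
  rw [count2 q hq, count3 q hq]
  rw [Finset.card_erase_of_mem (Finset.mem_univ _), Finset.card_univ, ZMod.card]
  simp only [smul_eq_mul]
  split_ifs <;> · rw [Nat.mul_comm]; omega
end

section
/- Let Φ be an irreducible root system with positive system Φ⁺ of rank ℓ ≥ 1, and let δ ∈ Φ⁺. Then the subset Ψ = Φ⁺ \ {δ} is compatible with the Worpitzky partition. Concretely: if A_i^◊ ∩ H_{α,m} (α ∈ Ψ, m ∈ ℤ) is a nonempty face but not a facet of a partially closed alcove A_i^◊, then it equals an intersection ∩_{j=1}^n H_{β_j, m_j} ∩ A_i^◊ of n ≥ 2 facet supporting hyperplanes (β_j ∈ Φ⁺), hence at least one β_k ≠ δ lies in Ψ and supports a facet containing the face. -/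
open scoped RealInnerProductSpace Classical BigOperators

noncomputable section

namespace AuxCompat

variable {ℓ : ℕ}

def sol (I : Finset (V ℓ × ℝ)) : Set (V ℓ) := {y | ∀ p ∈ I, ⟪p.1, y⟫ ≤ p.2}

lemma sol_anti {I J : Finset (V ℓ × ℝ)} (h : I ⊆ J) : sol J ⊆ sol I :=
  fun _ hy p hp => hy p (h hp)

lemma isOpen_strict (I : Finset (V ℓ × ℝ)) :
    IsOpen {y : V ℓ | ∀ p ∈ I, ⟪p.1, y⟫ < p.2} := by
  have h : {y : V ℓ | ∀ p ∈ I, ⟪p.1, y⟫ < p.2} = ⋂ p ∈ I, {y | ⟪p.1, y⟫ < p.2} := by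
    ext y; simp
  rw [h]
  exact isOpen_biInter_finset fun p _ =>
    isOpen_lt (Continuous.inner continuous_const continuous_id) continuous_const

lemma exists_ball (I : Finset (V ℓ × ℝ)) (x : V ℓ) (hx : ∀ p ∈ I, ⟪p.1, x⟫ < p.2) :
    ∃ ε > 0, ∀ w : V ℓ, ‖w‖ < ε → ∀ p ∈ I, ⟪p.1, x + w⟫ < p.2 := by
  obtain ⟨ε, hε, hball⟩ := Metric.isOpen_iff.1 (isOpen_strict I) x hx
  refine ⟨ε, hε, fun w hw => hball ?_⟩
  simp only [Metric.mem_ball, dist_eq_norm, add_sub_cancel_left]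
  exact hw

lemma exists_minimal (E : Finset (V ℓ × ℝ)) :
    ∃ I, I ⊆ E ∧ sol I = sol E ∧ ∀ j ∈ I, ∃ z ∈ sol (I.erase j), z ∉ sol E := by
  obtain ⟨I, hI, hmin⟩ := Finset.exists_min_image
    ((E.powerset).filter fun J => sol J = sol E) Finset.card ⟨E, by simp⟩
  simp only [Finset.mem_filter, Finset.mem_powerset] at hI
  refine ⟨I, hI.1, hI.2, fun j hj => ?_⟩
  by_contra h
  push_neg at h
  have hsub : (I.erase j) ⊆ E := (Finset.erase_subset _ _).trans hI.1
  have h2 : sol (I.erase j) = sol E := by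
    apply Set.Subset.antisymm h
    rw [← hI.2]
    exact sol_anti (Finset.erase_subset _ _)
  have hcard := hmin (I.erase j) (by simp [Finset.mem_filter, Finset.mem_powerset, hsub, h2])
  have := Finset.card_erase_lt_of_mem hj
  omega

lemma crossing (a z β : V ℓ) (c : ℝ) (ha : ⟪β, a⟫ < c) (hz : c < ⟪β, z⟫) :
    ∃ z' : V ℓ, ⟪β, z'⟫ = c ∧ ∀ u : V ℓ, ∀ r : ℝ, ⟪u, a⟫ < r → ⟪u, z⟫ ≤ r → ⟪u, z'⟫ < r := by
  set t : ℝ := (c - ⟪β, a⟫) / (⟪β, z⟫ - ⟪β, a⟫) with ht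
  have hd : 0 < ⟪β, z⟫ - ⟪β, a⟫ := by linarith
  have ht0 : 0 < t := div_pos (by linarith) hd
  have ht1 : t < 1 := (div_lt_one hd).2 (by linarith)
  have hmul : t * (⟪β, z⟫ - ⟪β, a⟫) = c - ⟪β, a⟫ := div_mul_cancel₀ _ hd.ne'
  refine ⟨(1 - t) • a + t • z, ?_, ?_⟩
  · rw [inner_add_right, real_inner_smul_right, real_inner_smul_right]
    nlinarith [hmul]
  · intro u r hu hz'
    rw [inner_add_right, real_inner_smul_right, real_inner_smul_right]
    nlinarith [mul_lt_mul_of_pos_left hu (by linarith : (0:ℝ) < 1 - t),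
      mul_le_mul_of_nonneg_left hz' ht0.le]

lemma parallel_of_halfspace (δ α : V ℓ) (hδ : δ ≠ 0)
    (h : ∀ w : V ℓ, ⟪δ, w⟫ ≤ 0 → ⟪α, w⟫ ≤ 0) : ∃ c : ℝ, 0 ≤ c ∧ α = c • δ := by
  have horth : ∀ w : V ℓ, ⟪δ, w⟫ = 0 → ⟪α, w⟫ = 0 := by
    intro w hw
    have h1 := h w hw.le
    have h2 := h (-w) (by rw [inner_neg_right, hw]; simp)
    rw [inner_neg_right] at h2
    linarith
  have hmem : α ∈ (ℝ ∙ δ)ᗮᗮ := by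
    intro w hw
    have hδw : ⟪δ, w⟫ = 0 := Submodule.mem_orthogonal_singleton_iff_inner_right.1 hw
    rw [real_inner_comm]
    exact horth w hδw
  rw [Submodule.orthogonal_orthogonal] at hmem
  obtain ⟨c, hc⟩ := Submodule.mem_span_singleton.1 hmem
  refine ⟨c, ?_, hc.symm⟩
  have h3 := h (-δ) (by rw [inner_neg_right]; linarith [real_inner_self_nonneg (x := δ)])
  rw [← hc, inner_neg_right, real_inner_smul_left] at h3
  have hpos : 0 < ⟪δ, δ⟫ :=
    lt_of_le_of_ne real_inner_self_nonneg (Ne.symm (inner_self_ne_zero.2 hδ))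
  nlinarith

lemma finrank_orth (β : V ℓ) (hβ : β ≠ 0) :
    Module.finrank ℝ ((ℝ ∙ β)ᗮ : Submodule ℝ (V ℓ)) = ℓ - 1 := by
  have h1 : Module.finrank ℝ (ℝ ∙ β : Submodule ℝ (V ℓ)) = 1 := finrank_span_singleton hβ
  have h2 := Submodule.finrank_add_finrank_orthogonal (K := (ℝ ∙ β : Submodule ℝ (V ℓ)))
  have h3 : Module.finrank ℝ (V ℓ) = ℓ := finrank_euclideanSpace_fin
  omega

lemma vectorSpan_eq (S : Set (V ℓ)) (β : V ℓ) (c : ℝ)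
    (hS : ∀ y ∈ S, ⟪β, y⟫ = c) (z : V ℓ) (hz : z ∈ S)
    (hw : ∀ w : V ℓ, ⟪β, w⟫ = 0 → ∃ ε : ℝ, 0 < ε ∧ z + ε • w ∈ S) :
    vectorSpan ℝ S = (ℝ ∙ β)ᗮ := by
  apply le_antisymm
  · rw [vectorSpan_def]
    apply Submodule.span_le.2
    rintro v hv
    obtain ⟨y, hy, y', hy', rfl⟩ := Set.mem_vsub.1 hv
    apply Submodule.mem_orthogonal_singleton_iff_inner_right.2
    have : y -ᵥ y' = y - y' := rfl
    rw [this, inner_sub_right, hS y hy, hS y' hy', sub_self]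
  · intro w hwmem
    have h0 : ⟪β, w⟫ = 0 := Submodule.mem_orthogonal_singleton_iff_inner_right.1 hwmem
    obtain ⟨ε, hε, hmem⟩ := hw w h0
    have hvs : (z + ε • w) -ᵥ z ∈ vectorSpan ℝ S := vsub_mem_vectorSpan ℝ hmem hz
    have h1 : (z + ε • w) -ᵥ z = ε • w := by
      rw [vsub_eq_sub]; abel
    rw [h1] at hvs
    have h2 := Submodule.smul_mem (vectorSpan ℝ S) ε⁻¹ hvs
    rwa [smul_smul, inv_mul_cancel₀ hε.ne', one_smul] at h2

-- arithmetic helpers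
lemma combo_lt_lt {a b u v c : ℝ} (ha : 0 ≤ a) (hb : 0 ≤ b) (hab : a + b = 1)
    (hu : c < u) (hv : c < v) : c < a * u + b * v := by
  rcases eq_or_lt_of_le ha with h | h
  · have hb1 : b = 1 := by linarith
    rw [← h, hb1]; simpa using hv
  · have h1 : a * c < a * u := mul_lt_mul_of_pos_left hu h
    have h2 : b * c ≤ b * v := mul_le_mul_of_nonneg_left hv.le hb
    have h3 : a * c + b * c = c := by rw [← add_mul, hab, one_mul]
    linarith

lemma combo_le_lt {a b u v c : ℝ} (ha : 0 ≤ a) (hb : 0 < b) (hab : a + b = 1)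
    (hu : c ≤ u) (hv : c < v) : c < a * u + b * v := by
  have h1 : a * c ≤ a * u := mul_le_mul_of_nonneg_left hu ha
  have h2 : b * c < b * v := mul_lt_mul_of_pos_left hv hb
  have h3 : a * c + b * c = c := by rw [← add_mul, hab, one_mul]
  linarith

lemma combo_le_le {a b u v c : ℝ} (ha : 0 ≤ a) (hb : 0 ≤ b) (hab : a + b = 1)
    (hu : u ≤ c) (hv : v ≤ c) : a * u + b * v ≤ c := by
  have h1 : a * u ≤ a * c := mul_le_mul_of_nonneg_left hu ha
  have h2 : b * v ≤ b * c := mul_le_mul_of_nonneg_left hv hb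
  have h3 : a * c + b * c = c := by rw [← add_mul, hab, one_mul]
  linarith

lemma combo_le_le' {a b u v c : ℝ} (ha : 0 ≤ a) (hb : 0 ≤ b) (hab : a + b = 1)
    (hu : c ≤ u) (hv : c ≤ v) : c ≤ a * u + b * v := by
  have h1 : a * c ≤ a * u := mul_le_mul_of_nonneg_left hu ha
  have h2 : b * c ≤ b * v := mul_le_mul_of_nonneg_left hv hb
  have h3 : a * c + b * c = c := by rw [← add_mul, hab, one_mul]
  linarith

end AuxCompat

namespace AuxCompat
variable {ℓ : ℕ}
lemma combo_lt_lt_upper {a b u v c : ℝ} (ha : 0 ≤ a) (hb : 0 ≤ b) (hab : a + b = 1)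
    (hu : u < c) (hv : v < c) : a * u + b * v < c := by
  rcases eq_or_lt_of_le ha with h | h
  · have hb1 : b = 1 := by linarith
    rw [← h, hb1]; simpa using hv
  · have h1 : a * u < a * c := mul_lt_mul_of_pos_left hu h
    have h2 : b * v ≤ b * c := mul_le_mul_of_nonneg_left hv.le hb
    have h3 : a * c + b * c = c := by rw [← add_mul, hab, one_mul]
    linarith

lemma combo_le_lt_upper {a b u v c : ℝ} (ha : 0 ≤ a) (hb : 0 < b) (hab : a + b = 1)
    (hu : u ≤ c) (hv : v < c) : a * u + b * v < c := by
  have h1 : a * u ≤ a * c := mul_le_mul_of_nonneg_left hu ha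
  have h2 : b * v < b * c := mul_lt_mul_of_pos_left hv hb
  have h3 : a * c + b * c = c := by rw [← add_mul, hab, one_mul]
  linarith
end AuxCompat

set_option maxHeartbeats 2000000 in
/-- removing a single root `δ` from `Φ⁺` yields a compatible subset. -/
theorem pos_remove_one_root_is_compatible {ℓ : ℕ} (hℓ : 1 ≤ ℓ) (R : RootSystemData ℓ)
    (δ : V ℓ) (hδ : δ ∈ R.pos) :
    R.Compatible (R.pos \ {δ}) := by
  classical
  intro A hA hAP α hα m hne
  obtain ⟨hαpos, hαδ'⟩ := hα
  have hαδ : α ≠ δ := fun h => hαδ' (by simp [h])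
  obtain ⟨x, hxAff, rfl⟩ := hA
  have hxA : x ∈ connectedComponentIn R.AffC x := mem_connectedComponentIn hxAff
  have hPf : R.pos.Finite := R.finite.subset R.pos_subset
  set P : Finset (V ℓ) := hPf.toFinset with hP
  have hPmem : ∀ β, β ∈ P ↔ β ∈ R.pos := fun β => hPf.mem_toFinset
  set k : V ℓ → ℤ := fun β => ⌊⟪β, x⟫⌋ with hk
  have hrne : ∀ β ∈ R.pos, β ≠ 0 := fun β hβ h0 => R.nonzero (h0 ▸ R.pos_subset hβ)
  have hinnerpos : ∀ β ∈ R.pos, (0:ℝ) < ⟪β, β⟫ := fun β hβ =>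
    lt_of_le_of_ne real_inner_self_nonneg (Ne.symm (inner_self_ne_zero.2 (hrne β hβ)))
  have hpar : ∀ β ∈ R.pos, ∀ γ ∈ R.pos, ∀ t : ℝ, γ = t • β → γ = β := by
    intro β hβ γ hγ t hteq
    rcases R.reduced β (R.pos_subset hβ) t (hteq ▸ R.pos_subset hγ) with h1 | h1
    · rw [hteq, h1, one_smul]
    · exfalso
      have hneg : γ = -β := by rw [hteq, h1, neg_one_smul]
      exact (R.pos_choice β (R.pos_subset hβ)).1 hβ (by rw [← hneg]; exact hγ)
  have hxB : ∀ β ∈ R.pos, ((k β : ℝ) < ⟪β, x⟫ ∧ ⟪β, x⟫ < (k β : ℝ) + 1) := by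
    intro β hβ
    refine ⟨lt_of_le_of_ne (Int.floor_le _) (fun h => hxAff β hβ (k β) h.symm), ?_⟩
    exact_mod_cast Int.lt_floor_add_one (⟪β, x⟫)
  set B : Set (V ℓ) := {y | ∀ β ∈ R.pos, (k β : ℝ) < ⟪β, y⟫ ∧ ⟪β, y⟫ < (k β : ℝ) + 1} with hB
  have hxB' : x ∈ B := fun β hβ => hxB β hβ
  have hBAff : B ⊆ R.AffC := by
    intro y hy β hβ m' heq
    have h1 := (hy β hβ).1
    have h2 := (hy β hβ).2
    rw [heq] at h1 h2
    have hi1 : (k β) < m' := by exact_mod_cast h1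
    have hi2 : m' < k β + 1 := by exact_mod_cast h2
    omega
  have hBconv : Convex ℝ B := by
    intro u hu v hv a b ha hb hab
    intro β hβ
    have hin : ⟪β, a • u + b • v⟫ = a * ⟪β, u⟫ + b * ⟪β, v⟫ := by
      rw [inner_add_right, real_inner_smul_right, real_inner_smul_right]
    rw [Set.mem_setOf_eq] at hu hv
    exact hin ▸ ⟨AuxCompat.combo_lt_lt ha hb hab (hu β hβ).1 (hv β hβ).1,
      AuxCompat.combo_lt_lt_upper ha hb hab (hu β hβ).2 (hv β hβ).2⟩
  have hAeqB : connectedComponentIn R.AffC x = B := by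
    apply Set.Subset.antisymm
    · intro y hy
      intro β hβ
      have hpre : IsPreconnected (connectedComponentIn R.AffC x) :=
        isPreconnected_connectedComponentIn
      have hcont : Continuous fun v : V ℓ => ⟪β, v⟫ :=
        Continuous.inner continuous_const continuous_id
      have himg : IsPreconnected ((fun v : V ℓ => ⟪β, v⟫) '' (connectedComponentIn R.AffC x)) :=
        hpre.image _ hcont.continuousOn
      have hord := himg.ordConnected
      have hsub := connectedComponentIn_subset R.AffC x
      have hnoint : ∀ (m' : ℤ),
          ((m' : ℝ)) ∉ ((fun v : V ℓ => ⟪β, v⟫) '' (connectedComponentIn R.AffC x)) := by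
        rintro m' ⟨v, hv, hveq⟩
        exact hsub hv β hβ m' hveq
      have hyimg : ⟪β, y⟫ ∈ (fun v : V ℓ => ⟪β, v⟫) '' (connectedComponentIn R.AffC x) :=
        Set.mem_image_of_mem _ hy
      have hximg : ⟪β, x⟫ ∈ (fun v : V ℓ => ⟪β, v⟫) '' (connectedComponentIn R.AffC x) :=
        Set.mem_image_of_mem _ hxA
      constructor
      · by_contra hle
        push_neg at hle
        exact hnoint (k β) (hord.out hyimg hximg ⟨hle, (hxB β hβ).1.le⟩)
      · by_contra hge
        push_neg at hge
        have hmem2 : ((k β : ℝ) + 1) ∈ (fun v : V ℓ => ⟪β, v⟫) '' (connectedComponentIn R.AffC x) :=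
          hord.out hximg hyimg ⟨(hxB β hβ).2.le, hge⟩
        exact hnoint (k β + 1) (by push_cast; exact hmem2)
    · exact hBconv.isPreconnected.subset_connectedComponentIn hxB' hBAff
  set C : Set (V ℓ) := {y | ∀ β ∈ R.pos, (k β : ℝ) ≤ ⟪β, y⟫ ∧ ⟪β, y⟫ ≤ (k β : ℝ) + 1} with hC
  have hCclosed : IsClosed C := by
    have hCeq : C = ⋂ β ∈ R.pos,
        ({y : V ℓ | (k β : ℝ) ≤ ⟪β, y⟫} ∩ {y | ⟪β, y⟫ ≤ (k β : ℝ) + 1}) := by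
      ext y
      simp only [hC, Set.mem_setOf_eq, Set.mem_iInter, Set.mem_inter_iff]
    rw [hCeq]
    exact isClosed_biInter fun β _ =>
      ((isClosed_le continuous_const (Continuous.inner continuous_const continuous_id)).inter
        (isClosed_le (Continuous.inner continuous_const continuous_id) continuous_const))
  have hclosA : closure (connectedComponentIn R.AffC x) = C := by
    apply Set.Subset.antisymm
    · apply closure_minimal _ hCclosed
      rw [hAeqB]
      intro y hy β hβ
      exact ⟨(hy β hβ).1.le, (hy β hβ).2.le⟩
    · intro y hy
      have hseq : Filter.Tendsto (fun n : ℕ => y + (1 / ((n : ℝ) + 1)) • (x - y))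
          Filter.atTop (nhds y) := by
        have h0 : Filter.Tendsto (fun n : ℕ => 1 / ((n : ℝ) + 1)) Filter.atTop (nhds (0:ℝ)) :=
          tendsto_one_div_add_atTop_nhds_zero_nat
        have h1 := (h0.smul_const (x - y)).const_add y
        simpa using h1
      apply mem_closure_of_tendsto hseq
      apply Filter.Eventually.of_forall
      intro n
      rw [hAeqB]
      intro β hβ
      have ht0 : (0:ℝ) < 1 / ((n:ℝ)+1) := by positivity
      have ht1 : 1 / ((n:ℝ)+1) ≤ 1 := by
        rw [div_le_one (by positivity)]
        linarith [Nat.cast_nonneg (α := ℝ) n]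
      have hin : ⟪β, y + (1/((n:ℝ)+1)) • (x - y)⟫
          = (1 - 1/((n:ℝ)+1)) * ⟪β, y⟫ + (1/((n:ℝ)+1)) * ⟪β, x⟫ := by
        rw [inner_add_right, real_inner_smul_right, inner_sub_right]
        ring
      rw [Set.mem_setOf_eq] at hy
      exact hin ▸ ⟨AuxCompat.combo_le_lt (by linarith) ht0 (by ring) (hy β hβ).1 (hxB β hβ).1,
        AuxCompat.combo_le_lt_upper (by linarith) ht0 (by ring) (hy β hβ).2 (hxB β hβ).2⟩
  set D : Set (V ℓ) := {y | ∀ β ∈ R.pos, (k β : ℝ) < ⟪β, y⟫ ∧ ⟪β, y⟫ ≤ (k β : ℝ) + 1} with hD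
  have hpcD : R.pc (connectedComponentIn R.AffC x) = D := by
    apply Set.Subset.antisymm
    · rintro y ⟨hycl, hycond⟩
      have hyC : y ∈ C := by rw [← hclosA]; exact hycl
      intro β hβ
      refine ⟨?_, (hyC β hβ).2⟩
      rcases lt_or_eq_of_le (hyC β hβ).1 with h | h
      · exact h
      · exfalso
        have hlt := hycond β hβ (k β) h.symm x hxA
        linarith [(hxB β hβ).1]
    · intro y hy
      refine ⟨?_, ?_⟩
      · rw [hclosA]
        intro β hβ
        exact ⟨(hy β hβ).1.le, (hy β hβ).2⟩
      · intro β hβ m' heq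
        have h1 := (hy β hβ).1
        have h2 := (hy β hβ).2
        rw [heq] at h1 h2
        have hm1 : k β < m' := by exact_mod_cast h1
        have hm2 : m' ≤ k β + 1 := by exact_mod_cast h2
        have hmeq : m' = k β + 1 := by omega
        intro y' hy'
        rw [hAeqB] at hy'
        rw [hmeq]
        push_cast
        exact (hy' β hβ).2
  set Fs : Set (V ℓ) := R.pc (connectedComponentIn R.AffC x) ∩ RootSystemData.Hyp α m with hFs
  have hFmem : ∀ y, y ∈ Fs ↔ (y ∈ D ∧ ⟪α, y⟫ = (m : ℝ)) := by
    intro y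
    constructor
    · intro hy
      exact ⟨by rw [← hpcD]; exact hy.1, hy.2⟩
    · intro hy
      exact ⟨by rw [hpcD]; exact hy.1, hy.2⟩
  obtain ⟨y₁, hy₁⟩ := hne
  have hy₁' := (hFmem y₁).1 hy₁
  have hm : m = k α + 1 := by
    have h1 := (hy₁'.1 α hαpos).1
    have h2 := (hy₁'.1 α hαpos).2
    rw [hy₁'.2] at h1 h2
    have hc1 : k α < m := by exact_mod_cast h1
    have hc2 : m ≤ k α + 1 := by exact_mod_cast h2
    omega
  have hαtight : ∀ y ∈ Fs, ⟪α, y⟫ = (k α : ℝ) + 1 := by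
    intro y hy
    have h1 := ((hFmem y).1 hy).2
    rw [h1, hm]
    push_cast
    ring
  have hFconv : Convex ℝ Fs := by
    intro u hu v hv a b ha hb hab
    rw [hFmem] at hu hv ⊢
    constructor
    · intro β hβ
      have hin : ⟪β, a • u + b • v⟫ = a * ⟪β, u⟫ + b * ⟪β, v⟫ := by
        rw [inner_add_right, real_inner_smul_right, real_inner_smul_right]
      exact hin ▸ ⟨AuxCompat.combo_lt_lt ha hb hab (hu.1 β hβ).1 (hv.1 β hβ).1,
        AuxCompat.combo_le_le ha hb hab (hu.1 β hβ).2 (hv.1 β hβ).2⟩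
    · have hin : ⟪α, a • u + b • v⟫ = a * ⟪α, u⟫ + b * ⟪α, v⟫ := by
        rw [inner_add_right, real_inner_smul_right, real_inner_smul_right]
      rw [hin, hu.2, hv.2, ← add_mul, hab, one_mul]
  set Q : Finset (V ℓ) := P.filter (fun β => ¬ ∀ y ∈ Fs, ⟪β, y⟫ = (k β : ℝ) + 1) with hQ
  have hQw : ∀ β ∈ Q, ∃ y ∈ Fs, ⟪β, y⟫ < (k β : ℝ) + 1 := by
    intro β hβ
    rw [hQ, Finset.mem_filter] at hβ
    obtain ⟨hβP, hβn⟩ := hβ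
    push_neg at hβn
    obtain ⟨y, hyF, hyne⟩ := hβn
    have hyD := ((hFmem y).1 hyF).1
    exact ⟨y, hyF, lt_of_le_of_ne ((hyD β ((hPmem β).1 hβP)).2) hyne⟩
  choose! g hgF hglt using hQw
  set tQ : Finset (Option (V ℓ)) := insert none (Q.image some) with htQ
  have hnone : (none : Option (V ℓ)) ∉ Q.image some := by
    intro hcontra
    obtain ⟨β, _, hβ⟩ := Finset.mem_image.1 hcontra
    exact Option.some_ne_none β hβ
  have hcardt : tQ.card = Q.card + 1 := by
    rw [htQ, Finset.card_insert_of_notMem hnone,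
      Finset.card_image_of_injective _ (Option.some_injective _)]
  set wgt : ℝ := ((Q.card : ℝ) + 1)⁻¹ with hwgt
  have hwgtpos : 0 < wgt := by positivity
  set zf : Option (V ℓ) → V ℓ := fun o => Option.elim o y₁ (fun β => g β) with hzf
  have hzfF : ∀ i ∈ tQ, zf i ∈ Fs := by
    intro i hi
    rw [htQ, Finset.mem_insert] at hi
    rcases hi with rfl | hi
    · exact hy₁
    · obtain ⟨β, hβQ, rfl⟩ := Finset.mem_image.1 hi
      exact hgF β hβQ
  have hsumw : ∑ _i ∈ tQ, wgt = 1 := by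
    rw [Finset.sum_const, hcardt, nsmul_eq_mul, hwgt]
    push_cast
    field_simp
  set x₀ : V ℓ := ∑ i ∈ tQ, wgt • zf i with hx₀
  have hx₀F : x₀ ∈ Fs := hFconv.sum_mem (fun i _ => hwgtpos.le) hsumw hzfF
  have hx₀inner : ∀ γ : V ℓ, ⟪γ, x₀⟫ = ∑ i ∈ tQ, wgt * ⟪γ, zf i⟫ := by
    intro γ
    rw [hx₀, inner_sum]
    exact Finset.sum_congr rfl fun i _ => real_inner_smul_right _ _ _
  have hdich : ∀ β ∈ R.pos,
      (∀ y ∈ Fs, ⟪β, y⟫ = (k β : ℝ) + 1) ∨ ⟪β, x₀⟫ < (k β : ℝ) + 1 := by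
    intro β hβ
    by_cases htight : ∀ y ∈ Fs, ⟪β, y⟫ = (k β : ℝ) + 1
    · exact Or.inl htight
    · right
      have hβQ : β ∈ Q := by
        rw [hQ, Finset.mem_filter]
        exact ⟨(hPmem β).2 hβ, htight⟩
      rw [hx₀inner]
      have hbound : ∀ i ∈ tQ, wgt * ⟪β, zf i⟫ ≤ wgt * ((k β : ℝ) + 1) := by
        intro i hi
        have hle := (((hFmem (zf i)).1 (hzfF i hi)).1 β hβ).2
        exact mul_le_mul_of_nonneg_left hle hwgtpos.le
      have hstrict : ∃ i ∈ tQ, wgt * ⟪β, zf i⟫ < wgt * ((k β : ℝ) + 1) := by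
        refine ⟨some β, by rw [htQ]; exact Finset.mem_insert_of_mem (Finset.mem_image_of_mem _ hβQ), ?_⟩
        have hlt : ⟪β, zf (some β)⟫ < (k β : ℝ) + 1 := by
          simpa [hzf] using hglt β hβQ
        exact mul_lt_mul_of_pos_left hlt hwgtpos
      calc ∑ i ∈ tQ, wgt * ⟪β, zf i⟫ < ∑ _i ∈ tQ, wgt * ((k β : ℝ) + 1) :=
            Finset.sum_lt_sum hbound hstrict
        _ = (k β : ℝ) + 1 := by
            rw [Finset.sum_const, hcardt, nsmul_eq_mul, hwgt]
            push_cast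
            field_simp
  set E : Finset (V ℓ × ℝ) :=
    P.image (fun β => (β, (k β : ℝ) + 1)) ∪ P.image (fun β => (-β, -(k β : ℝ))) with hE
  have hsolE : AuxCompat.sol E = C := by
    ext y
    constructor
    · intro hy β hβ
      have h1 := hy (β, (k β : ℝ) + 1)
        (Finset.mem_union_left _ (Finset.mem_image_of_mem _ ((hPmem β).2 hβ)))
      have h2 := hy (-β, -(k β : ℝ))
        (Finset.mem_union_right _ (Finset.mem_image_of_mem _ ((hPmem β).2 hβ)))
      simp only at h1 h2
      rw [inner_neg_left] at h2
      exact ⟨by linarith, h1⟩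
    · intro hy p hp
      rw [hE, Finset.mem_union] at hp
      rcases hp with hp | hp
      · obtain ⟨β, hβ, rfl⟩ := Finset.mem_image.1 hp
        exact (hy β ((hPmem β).1 hβ)).2
      · obtain ⟨β, hβ, rfl⟩ := Finset.mem_image.1 hp
        simp only
        rw [inner_neg_left]
        linarith [(hy β ((hPmem β).1 hβ)).1]
  obtain ⟨I, hIE, hIsol, hImin⟩ := AuxCompat.exists_minimal E
  have hsolI : AuxCompat.sol I = C := by rw [hIsol, hsolE]
  have hstrx : ∀ p ∈ E, ⟪p.1, x⟫ < p.2 := by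
    intro p hp
    rw [hE, Finset.mem_union] at hp
    rcases hp with hp | hp
    · obtain ⟨β, hβ, rfl⟩ := Finset.mem_image.1 hp
      exact (hxB β ((hPmem β).1 hβ)).2
    · obtain ⟨β, hβ, rfl⟩ := Finset.mem_image.1 hp
      simp only
      rw [inner_neg_left]
      linarith [(hxB β ((hPmem β).1 hβ)).1]
  have key : ∃ β, β ∈ R.pos ∧ β ≠ δ ∧ (β, (k β : ℝ) + 1) ∈ I ∧
      (∀ y ∈ Fs, ⟪β, y⟫ = (k β : ℝ) + 1) := by
    by_contra hcon
    push_neg at hcon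
    have hx₀D : x₀ ∈ D := ((hFmem x₀).1 hx₀F).1
    have hstrict : ∀ p ∈ I.erase (δ, (k δ : ℝ) + 1), ⟪p.1, x₀⟫ < p.2 := by
      intro p hp
      have hpI := Finset.mem_of_mem_erase hp
      have hpne := Finset.ne_of_mem_erase hp
      have hpE := hIE hpI
      rw [hE, Finset.mem_union] at hpE
      rcases hpE with hpE | hpE
      · obtain ⟨β, hβP, rfl⟩ := Finset.mem_image.1 hpE
        have hβpos := (hPmem β).1 hβP
        have hβδ : β ≠ δ := by
          intro h
          subst h
          exact hpne rfl
        rcases hdich β hβpos with htight | hlt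
        · obtain ⟨y, hyF, hyne⟩ := hcon β hβpos hβδ hpI
          exact absurd (htight y hyF) hyne
        · exact hlt
      · obtain ⟨β, hβP, rfl⟩ := Finset.mem_image.1 hpE
        simp only
        rw [inner_neg_left]
        linarith [(hx₀D β ((hPmem β).1 hβP)).1]
    obtain ⟨ε, hε, hball⟩ := AuxCompat.exists_ball _ x₀ hstrict
    have hcone : ∀ w : V ℓ, ⟪δ, w⟫ ≤ 0 → ⟪α, w⟫ ≤ 0 := by
      intro w hw
      rcases eq_or_ne w 0 with rfl | hwne
      · simp
      · have hwpos : 0 < ‖w‖ := norm_pos_iff.2 hwne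
        have hc : 0 < ε / (2 * ‖w‖) := by positivity
        set w' : V ℓ := (ε / (2 * ‖w‖)) • w with hw'
        have hnorm : ‖w'‖ < ε := by
          rw [hw', norm_smul, Real.norm_eq_abs, abs_of_pos hc]
          have heq2 : ε / (2 * ‖w‖) * ‖w‖ = ε / 2 := by
            field_simp
          rw [heq2]
          linarith
        have hsolmem : x₀ + w' ∈ AuxCompat.sol I := by
          intro p hp
          by_cases hpδ : p = (δ, (k δ : ℝ) + 1)
          · subst hpδ
            simp only
            rw [inner_add_right]
            have h1 : ⟪δ, x₀⟫ ≤ (k δ : ℝ) + 1 := (hx₀D δ hδ).2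
            have h2 : ⟪δ, w'⟫ ≤ 0 := by
              rw [hw', real_inner_smul_right]
              exact mul_nonpos_of_nonneg_of_nonpos hc.le hw
            linarith
          · exact (hball w' hnorm p (Finset.mem_erase.2 ⟨hpδ, hp⟩)).le
        have hCmem : x₀ + w' ∈ C := by rw [← hsolI]; exact hsolmem
        have hup : ⟪α, x₀ + w'⟫ ≤ (k α : ℝ) + 1 := (hCmem α hαpos).2
        have htx₀ : ⟪α, x₀⟫ = (k α : ℝ) + 1 := hαtight x₀ hx₀F
        rw [inner_add_right, htx₀] at hup
        have hw'le : ⟪α, w'⟫ ≤ 0 := by linarith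
        rw [hw', real_inner_smul_right] at hw'le
        by_contra hposα
        push_neg at hposα
        nlinarith
    obtain ⟨c, hc0, hceq⟩ := AuxCompat.parallel_of_halfspace δ α (hrne δ hδ) hcone
    have hcΦ : c • δ ∈ R.Φ := by rw [← hceq]; exact R.pos_subset hαpos
    rcases R.reduced δ (R.pos_subset hδ) c hcΦ with h1 | h1
    · rw [h1, one_smul] at hceq
      exact hαδ hceq
    · rw [h1] at hc0
      norm_num at hc0
  obtain ⟨β, hβpos, hβδ, hβI, hβtight⟩ := key
  set j : V ℓ × ℝ := (β, (k β : ℝ) + 1) with hj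
  obtain ⟨z, hzsol, hznot⟩ := hImin j hβI
  have hznotI : z ∉ AuxCompat.sol I := by rw [hIsol]; exact hznot
  have hviol : (k β : ℝ) + 1 < ⟪β, z⟫ := by
    by_contra hle
    push_neg at hle
    apply hznotI
    intro p hp
    by_cases hpj : p = j
    · subst hpj
      exact hle
    · exact hzsol p (Finset.mem_erase.2 ⟨hpj, hp⟩)
  obtain ⟨z', hz'eq, hz'cross⟩ :=
    AuxCompat.crossing x z β ((k β : ℝ) + 1) (hxB β hβpos).2 hviol
  have hz'O : ∀ p ∈ I.erase j, ⟪p.1, z'⟫ < p.2 := fun p hp =>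
    hz'cross p.1 p.2 (hstrx p (hIE (Finset.mem_of_mem_erase hp))) (hzsol p hp)
  have hOsub : ∀ y : V ℓ, ⟪β, y⟫ = (k β : ℝ) + 1 → (∀ p ∈ I.erase j, ⟪p.1, y⟫ < p.2) →
      y ∈ R.pc (connectedComponentIn R.AffC x) ∩ RootSystemData.Hyp β (k β + 1) := by
    intro y hyβ hyO
    have hysol : y ∈ AuxCompat.sol I := by
      intro p hp
      by_cases hpj : p = j
      · subst hpj
        exact le_of_eq hyβ
      · exact (hyO p (Finset.mem_erase.2 ⟨hpj, hp⟩)).le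
    have hyC : y ∈ C := by rw [← hsolI]; exact hysol
    have hyD : y ∈ D := by
      intro γ hγ
      refine ⟨?_, (hyC γ hγ).2⟩
      rcases eq_or_ne γ β with rfl | hγβ
      · rw [hyβ]
        linarith
      · rcases lt_or_eq_of_le (hyC γ hγ).1 with h | h
        · exact h
        · exfalso
          set c₀ : ℝ := ⟪γ, β⟫ / ⟪β, β⟫ with hc₀
          set p' : V ℓ := γ - c₀ • β with hp'
          have hβp' : ⟪β, p'⟫ = 0 := by
            rw [hp', inner_sub_right, real_inner_smul_right, hc₀,
              div_mul_cancel₀ _ (hinnerpos β hβpos).ne', real_inner_comm β γ, sub_self]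
          have hp'ne : p' ≠ 0 := by
            intro h0
            have hγeq : γ = c₀ • β := by rwa [hp', sub_eq_zero] at h0
            exact hγβ (hpar β hβpos γ hγ c₀ hγeq)
          have hγw : 0 < ⟪γ, p'⟫ := by
            have hdecomp : γ = p' + c₀ • β := by rw [hp']; abel
            have hcalc : ⟪γ, p'⟫ = ⟪p', p'⟫ + c₀ * ⟪β, p'⟫ := by
              conv_lhs => rw [hdecomp]
              rw [inner_add_left, real_inner_smul_left]
            rw [hcalc, hβp', mul_zero, add_zero]
            exact lt_of_le_of_ne real_inner_self_nonneg (Ne.symm (inner_self_ne_zero.2 hp'ne))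
          obtain ⟨ε, hε, hball⟩ := AuxCompat.exists_ball _ y hyO
          have hp'pos : 0 < ‖p'‖ := norm_pos_iff.2 hp'ne
          have hcw : 0 < ε / (2 * ‖p'‖) := by positivity
          set w : V ℓ := -((ε / (2 * ‖p'‖)) • p') with hwdef
          have hnw : ‖w‖ < ε := by
            rw [hwdef, norm_neg, norm_smul, Real.norm_eq_abs, abs_of_pos hcw]
            have heq2 : ε / (2 * ‖p'‖) * ‖p'‖ = ε / 2 := by field_simp
            rw [heq2]
            linarith
          have hmem : y + w ∈ AuxCompat.sol I := by
            intro p hp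
            by_cases hpj : p = j
            · subst hpj
              simp only [hj]
              rw [inner_add_right, hyβ]
              have hzero : ⟪β, w⟫ = 0 := by
                rw [hwdef, inner_neg_right, real_inner_smul_right, hβp', mul_zero, neg_zero]
              rw [hzero]
              linarith
            · exact (hball w hnw p (Finset.mem_erase.2 ⟨hpj, hp⟩)).le
          have hmemC : y + w ∈ C := by rw [← hsolI]; exact hmem
          have hlow : (k γ : ℝ) ≤ ⟪γ, y + w⟫ := (hmemC γ hγ).1
          have hval : ⟪γ, y + w⟫ = (k γ : ℝ) - (ε / (2 * ‖p'‖)) * ⟪γ, p'⟫ := by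
            rw [inner_add_right, ← h, hwdef, inner_neg_right, real_inner_smul_right]
            ring
          nlinarith [mul_pos hcw hγw]
    refine ⟨?_, ?_⟩
    · rw [hpcD]
      exact hyD
    · show ⟪β, y⟫ = ((k β + 1 : ℤ) : ℝ)
      push_cast
      exact hyβ
  have hz'S : z' ∈ R.pc (connectedComponentIn R.AffC x) ∩ RootSystemData.Hyp β (k β + 1) :=
    hOsub z' hz'eq hz'O
  obtain ⟨ε₂, hε₂, hball₂⟩ := AuxCompat.exists_ball _ z' hz'O
  have hperturb : ∀ w : V ℓ, ⟪β, w⟫ = 0 → ∃ ε : ℝ, 0 < ε ∧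
      z' + ε • w ∈ R.pc (connectedComponentIn R.AffC x) ∩ RootSystemData.Hyp β (k β + 1) := by
    intro w hw
    rcases eq_or_ne w 0 with rfl | hwne
    · exact ⟨1, one_pos, by simpa using hz'S⟩
    · have hwpos : 0 < ‖w‖ := norm_pos_iff.2 hwne
      refine ⟨ε₂ / (2 * ‖w‖), by positivity, ?_⟩
      apply hOsub
      · rw [inner_add_right, real_inner_smul_right, hw, hz'eq]
        ring
      · intro p hp
        have hn : ‖(ε₂ / (2 * ‖w‖)) • w‖ < ε₂ := by
          rw [norm_smul, Real.norm_eq_abs, abs_of_pos (by positivity)]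
          have heq2 : ε₂ / (2 * ‖w‖) * ‖w‖ = ε₂ / 2 := by field_simp
          rw [heq2]
          linarith
        exact hball₂ _ hn p hp
  have hSeq : vectorSpan ℝ
      (R.pc (connectedComponentIn R.AffC x) ∩ RootSystemData.Hyp β (k β + 1)) = (ℝ ∙ β)ᗮ := by
    apply AuxCompat.vectorSpan_eq _ β ((k β : ℝ) + 1) _ z' hz'S hperturb
    intro y hy
    have h2 : ⟪β, y⟫ = ((k β + 1 : ℤ) : ℝ) := hy.2
    push_cast at h2
    exact h2
  refine ⟨β, ⟨hβpos, fun h => hβδ (by simpa using h)⟩, k β + 1, ?_, ?_⟩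
  · intro y hy
    refine ⟨hy.1, ?_⟩
    show ⟪β, y⟫ = ((k β + 1 : ℤ) : ℝ)
    push_cast
    exact hβtight y hy
  · refine ⟨⟨β, hβpos, k β + 1, rfl⟩, ?_⟩
    rw [hSeq]
    exact AuxCompat.finrank_orth β (hrne β hβpos)
end
end
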